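/- arXiv:1711.01829 — 4 statements merged into one kernel-verified Lean document; each statement's English description precedes it below -/
import Mathlib

section
/- (Heaviside's integral formula) For every positive integer k, ∫_0^∞ K_0(t)·t^{k-1} dt = 2^{k-2}·[Γ(k/2)]^2, where Γ is Euler's gamma function. -/
open MeasureTheory Real

/-- Modified Bessel function of the first kind, order zero. -/
noncomputable def I0 (t : ℝ) : ℝ := (1/π) * ∫ θ in (0:ℝ)..π, Real.exp (t * Real.cos θ)

/-- Modified Bessel function of the second kind, order zero. -/
noncomputable def K0 (t : ℝ) : ℝ := ∫ u in Set.Ioi (0:ℝ), Real.exp (-t * Real.cosh u)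

/-- Modified Bessel function of the first kind, order one: `I₁ = I₀'`. -/
noncomputable def I1 (t : ℝ) : ℝ := deriv I0 t

/-- Modified Bessel function of the second kind, order one: `K₁ = -K₀'`. -/
noncomputable def K1 (t : ℝ) : ℝ := -deriv K0 t

open Set

/-- Wallis-type closed form for `∫ cos^n` in terms of the Gamma function. -/
lemma cos_pow_gamma (n : ℕ) :
    ∫ x in (0:ℝ)..(π/2), Real.cos x ^ n
      = Real.sqrt π / 2 * Real.Gamma ((n+1)/2) / Real.Gamma ((n:ℝ)/2 + 1) := by
  induction n using Nat.strong_induction_on with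
  | _ n ih =>
    match n with
    | 0 =>
      have h12 : ((0:ℕ)+1:ℝ)/2 = 1/2 := by norm_num
      simp only [pow_zero, Nat.cast_zero, h12,
        Real.Gamma_one_half_eq, zero_div, zero_add, Real.Gamma_one, div_one]
      rw [div_mul_eq_mul_div, Real.mul_self_sqrt Real.pi_pos.le]
      simp
    | 1 =>
      simp only [pow_one, integral_cos, Real.sin_zero, sub_zero, Real.sin_pi_div_two]
      rw [show ((1:ℕ):ℝ)/2 + 1 = 1/2 + 1 by norm_num, Real.Gamma_add_one (by norm_num),
        Real.Gamma_one_half_eq, show (((1:ℕ):ℝ)+1)/2 = 1 by norm_num, Real.Gamma_one]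
      rw [eq_div_iff (by positivity)]
      ring
    | (n+2) =>
      rw [integral_cos_pow, ih n (by omega)]
      simp only [Real.cos_pi_div_two, Real.sin_zero, Real.cos_zero, Real.sin_pi_div_two]
      rw [show ((((n:ℕ)+2:ℕ)):ℝ)+1 = ((n:ℝ)+1) + 2 by push_cast; ring]
      rw [show (((n:ℝ)+1)+2)/2 = ((n:ℝ)+1)/2 + 1 by ring,
        Real.Gamma_add_one (by positivity : (0:ℝ) < ((n:ℝ)+1)/2).ne',
        show (((n+2:ℕ)):ℝ)/2 + 1 = ((n:ℝ)/2 + 1) + 1 by push_cast; ring,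
        Real.Gamma_add_one (by positivity : (0:ℝ) < (n:ℝ)/2+1).ne']
      have h1 : Real.Gamma ((n:ℝ)/2+1) ≠ 0 := (Real.Gamma_pos_of_pos (by positivity)).ne'
      set A := Real.Gamma (((n:ℝ)+1)/2)
      set B := Real.Gamma ((n:ℝ)/2+1)
      have h2 : ((n:ℝ)+2) ≠ 0 := by positivity
      have h3 : ((n:ℝ)/2+1) ≠ 0 := by positivity
      field_simp
      ring

lemma gd_image : (fun u : ℝ => Real.arctan (Real.sinh u)) '' Set.Ioi 0 = Set.Ioo 0 (π/2) := by
  ext θ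
  constructor
  · rintro ⟨u, hu, rfl⟩
    refine ⟨?_, Real.arctan_lt_pi_div_two _⟩
    have := Real.arctan_strictMono (Real.sinh_pos_iff.2 hu)
    rwa [Real.arctan_zero] at this
  · rintro ⟨h1, h2⟩
    refine ⟨Real.arsinh (Real.tan θ), ?_, ?_⟩
    · rw [Set.mem_Ioi, ← Real.arsinh_zero, Real.arsinh_lt_arsinh]
      exact Real.tan_pos_of_pos_of_lt_pi_div_two h1 h2
    · show Real.arctan (Real.sinh (Real.arsinh (Real.tan θ))) = θ
      rw [Real.sinh_arsinh, Real.arctan_tan (by linarith [Real.pi_pos]) h2]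

lemma hasDeriv_gd (u : ℝ) :
    HasDerivAt (fun u : ℝ => Real.arctan (Real.sinh u)) (Real.cosh u)⁻¹ u := by
  have h := (Real.hasDerivAt_arctan (Real.sinh u)).comp u (Real.hasDerivAt_sinh u)
  refine h.congr_deriv ?_
  have hc := Real.cosh_pos u
  rw [← Real.cosh_sq']
  field_simp

lemma cos_gd (u : ℝ) : Real.cos (Real.arctan (Real.sinh u)) = (Real.cosh u)⁻¹ := by
  rw [Real.cos_arctan, ← Real.cosh_sq', Real.sqrt_sq (Real.cosh_pos u).le, one_div]

/-- Substitution `θ = gd u` (Gudermannian): the integral of `sech^(n+1)` equals `∫ cos^n`. -/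
lemma sech_pow_integral (n : ℕ) :
    ∫ u in Set.Ioi (0:ℝ), ((Real.cosh u)⁻¹)^(n+1)
      = ∫ x in (0:ℝ)..(π/2), Real.cos x ^ n := by
  have hinj : Set.InjOn (fun u : ℝ => Real.arctan (Real.sinh u)) (Set.Ioi 0) :=
    (Real.arctan_injective.comp Real.sinh_injective).injOn
  have := integral_image_eq_integral_abs_deriv_smul measurableSet_Ioi
    (fun u _ => (hasDeriv_gd u).hasDerivWithinAt) hinj (fun θ => Real.cos θ ^ n)
  rw [gd_image] at this
  rw [intervalIntegral.integral_of_le (by positivity), integral_Ioc_eq_integral_Ioo]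
  rw [this]
  refine setIntegral_congr_fun measurableSet_Ioi (fun u _ => ?_)
  rw [cos_gd, smul_eq_mul, abs_of_pos (by positivity), pow_succ]
  ring

/-- The Mellin-type integral of `exp (-t * a)` over `t ∈ (0, ∞)`. -/
lemma inner_val {a : ℝ} (ha : 0 < a) (n : ℕ) :
    ∫ t in Set.Ioi (0:ℝ), Real.exp (-t * a) * t ^ n
      = Real.Gamma ((n:ℝ)+1) * (a⁻¹)^(n+1) := by
  have h := Real.integral_rpow_mul_exp_neg_mul_Ioi (a := ((n:ℝ)+1)) (r := a)
    (by positivity) ha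
  rw [show (∫ t in Set.Ioi (0:ℝ), Real.exp (-t * a) * t ^ n)
      = ∫ t in Set.Ioi (0:ℝ), t ^ ((n:ℝ)+1-1) * Real.exp (-(a * t)) from
    setIntegral_congr_fun measurableSet_Ioi (fun t ht => by
      rw [show ((n:ℝ)+1-1) = ((n:ℕ):ℝ) by ring, Real.rpow_natCast]; ring_nf), h]
  rw [one_div, show ((n:ℝ)+1) = ((n+1 : ℕ) : ℝ) by push_cast; ring, Real.rpow_natCast]
  ring

lemma inner_integrable {a : ℝ} (ha : 0 < a) (n : ℕ) :
    IntegrableOn (fun t => Real.exp (-t * a) * t ^ n) (Set.Ioi (0:ℝ)) := by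
  have h := integrableOn_rpow_mul_exp_neg_mul_rpow
    (s := (n:ℝ)) (p := 1) (b := a)
    (by exact_mod_cast neg_one_lt_zero.trans_le n.cast_nonneg) zero_lt_one ha
  refine (h.congr_fun (fun t ht => ?_) measurableSet_Ioi)
  beta_reduce
  rw [Real.rpow_one, Real.rpow_natCast]
  ring_nf

lemma sech_le (u : ℝ) : (Real.cosh u)⁻¹ ≤ 2 * Real.exp (-1 * u) := by
  have h2 : Real.exp u / 2 ≤ Real.cosh u := by
    rw [Real.cosh_eq]
    have := (Real.exp_pos (-u)).le
    linarith
  calc (Real.cosh u)⁻¹ ≤ (Real.exp u / 2)⁻¹ := by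
        exact inv_anti₀ (by positivity) h2
    _ = 2 * Real.exp (-1 * u) := by
        rw [neg_one_mul, Real.exp_neg]
        field_simp

lemma sech_pow_integrable (n : ℕ) :
    IntegrableOn (fun u : ℝ => ((Real.cosh u)⁻¹) ^ (n+1)) (Set.Ioi (0:ℝ)) := by
  have hexp : IntegrableOn (fun u : ℝ => 2 * Real.exp (-1 * u)) (Set.Ioi (0:ℝ)) :=
    (exp_neg_integrableOn_Ioi 0 one_pos).const_mul 2
  refine Integrable.mono' hexp ?_ ?_
  · exact (Continuous.aestronglyMeasurable
      ((Real.continuous_cosh.inv₀ (fun x => (Real.cosh_pos x).ne')).pow _)).restrict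
  · refine Filter.Eventually.of_forall (fun u => ?_)
    have hc := Real.cosh_pos u
    rw [Real.norm_eq_abs, abs_of_nonneg (by positivity)]
    calc ((Real.cosh u)⁻¹)^(n+1) ≤ (Real.cosh u)⁻¹ := by
          refine pow_le_of_le_one (by positivity) ?_ (Nat.succ_ne_zero n)
          rw [inv_le_one_iff₀]
          exact Or.inr (Real.one_le_cosh u)
      _ ≤ _ := sech_le u

lemma final_algebra (n : ℕ) :
    Real.Gamma ((n:ℝ)+1) * (Real.sqrt π / 2 * Real.Gamma (((n:ℝ)+1)/2) / Real.Gamma ((n:ℝ)/2 + 1))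
      = (2:ℝ) ^ (((n:ℝ)+1) - 2) * (Real.Gamma (((n:ℝ)+1)/2))^2 := by
  have hs := Real.Gamma_mul_Gamma_add_half (((n:ℝ)+1)/2)
  rw [show ((n:ℝ)+1)/2 + 1/2 = (n:ℝ)/2 + 1 by ring,
    show 2*(((n:ℝ)+1)/2) = (n:ℝ)+1 by ring] at hs
  set A := Real.Gamma (((n:ℝ)+1)/2) with hA
  set B := Real.Gamma ((n:ℝ)/2 + 1) with hB
  have hApos : 0 < A := Real.Gamma_pos_of_pos (by positivity)
  have hBpos : 0 < B := Real.Gamma_pos_of_pos (by positivity)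
  have hsqrt : (0:ℝ) < Real.sqrt π := Real.sqrt_pos.2 Real.pi_pos
  have hGamma : Real.Gamma ((n:ℝ)+1) = A * B * (2:ℝ)^((n:ℝ)) / Real.sqrt π := by
    rw [hs, show (1:ℝ) - ((n:ℝ)+1) = -(n:ℝ) by ring, Real.rpow_neg (by norm_num : (0:ℝ) ≤ 2)]
    have h2 : ((2:ℝ)^((n:ℝ))) ≠ 0 := by positivity
    field_simp
  have he2 : (2:ℝ) ^ (((n:ℝ)+1) - 2) = (2:ℝ)^((n:ℝ)) / 2 := by
    rw [show ((n:ℝ)+1) - 2 = (n:ℝ) - 1 by ring, Real.rpow_sub (by norm_num), Real.rpow_one]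
  rw [hGamma, he2]
  field_simp

theorem heaviside_integral (k : ℕ) (hk : 0 < k) :
    ∫ t in Set.Ioi (0:ℝ), K0 t * t ^ (k - 1)
      = (2:ℝ) ^ ((k:ℝ) - 2) * (Real.Gamma ((k:ℝ)/2))^2 := by
  obtain ⟨n, rfl⟩ : ∃ n, k = n + 1 := ⟨k - 1, (Nat.succ_pred_eq_of_pos hk).symm⟩
  simp only [Nat.add_sub_cancel]
  set μ : Measure ℝ := volume.restrict (Set.Ioi 0) with hμ
  have hcont : Continuous (fun p : ℝ × ℝ => Real.exp (-p.1 * Real.cosh p.2) * p.1 ^ n) := by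
    fun_prop
  have hF : Integrable (Function.uncurry fun t u => Real.exp (-t * Real.cosh u) * t ^ n)
      (μ.prod μ) := by
    show Integrable (fun p : ℝ × ℝ => Real.exp (-p.1 * Real.cosh p.2) * p.1 ^ n) (μ.prod μ)
    rw [MeasureTheory.integrable_prod_iff' hcont.aestronglyMeasurable]
    constructor
    · refine Filter.Eventually.of_forall (fun u => ?_)
      exact inner_integrable (Real.cosh_pos u) n
    · have hval : ∀ u : ℝ, (∫ t, ‖Real.exp (-t * Real.cosh u) * t ^ n‖ ∂μ)
          = Real.Gamma ((n:ℝ)+1) * ((Real.cosh u)⁻¹)^(n+1) := by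
        intro u
        rw [← inner_val (Real.cosh_pos u) n]
        refine setIntegral_congr_fun measurableSet_Ioi (fun t ht => ?_)
        rw [Real.norm_eq_abs, abs_of_nonneg (mul_nonneg (Real.exp_nonneg _) (pow_nonneg ht.le n))]
      simp only [hval]
      exact (sech_pow_integrable n).const_mul _
  calc ∫ t in Set.Ioi (0:ℝ), K0 t * t ^ n
      = ∫ t in Set.Ioi (0:ℝ), ∫ u in Set.Ioi (0:ℝ),
          Real.exp (-t * Real.cosh u) * t ^ n := by
        refine setIntegral_congr_fun measurableSet_Ioi (fun t ht => ?_)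
        rw [K0, ← integral_mul_const]
    _ = ∫ u in Set.Ioi (0:ℝ), ∫ t in Set.Ioi (0:ℝ),
          Real.exp (-t * Real.cosh u) * t ^ n := integral_integral_swap hF
    _ = ∫ u in Set.Ioi (0:ℝ), Real.Gamma ((n:ℝ)+1) * ((Real.cosh u)⁻¹)^(n+1) := by
        refine setIntegral_congr_fun measurableSet_Ioi (fun u _ => ?_)
        exact inner_val (Real.cosh_pos u) n
    _ = Real.Gamma ((n:ℝ)+1) * ∫ u in Set.Ioi (0:ℝ), ((Real.cosh u)⁻¹)^(n+1) :=
        integral_const_mul _ _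
    _ = Real.Gamma ((n:ℝ)+1) *
          (Real.sqrt π / 2 * Real.Gamma (((n:ℝ)+1)/2) / Real.Gamma ((n:ℝ)/2 + 1)) := by
        rw [sech_pow_integral, cos_pow_gamma]
    _ = (2:ℝ) ^ ((((n+1:ℕ)):ℝ) - 2) * (Real.Gamma ((((n+1:ℕ)):ℝ)/2))^2 := by
        push_cast
        exact final_algebra n
end

section
/- For all real u with 0 < u < 1 we have ∫_0^∞ I_0(√u·t)·K_0(t)·t dt = 1/(1-u), where I_0 and K_0 are the modified Bessel functions of zeroth order. -/
open MeasureTheory Real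

section WSaux
open Set Filter Topology

lemma aux_t_tendsto {a : ℝ} (ha : 0 < a) :
    Tendsto (fun t : ℝ => -(t/a + 1/a^2) * Real.exp (-a*t)) atTop (nhds 0) := by
  have h1 : Tendsto (fun t : ℝ => t * Real.exp (-a*t)) atTop (nhds 0) := by
    have := tendsto_rpow_mul_exp_neg_mul_atTop_nhds_zero 1 a ha
    refine this.congr' ?_
    filter_upwards [eventually_ge_atTop (0:ℝ)] with t ht
    rw [rpow_one]
  have h2 : Tendsto (fun t : ℝ => Real.exp (-a*t)) atTop (nhds 0) := by
    have hb : Tendsto (fun t : ℝ => -a*t) atTop atBot := by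
      apply tendsto_id.const_mul_atTop_of_neg (by linarith)
    exact Real.tendsto_exp_atBot.comp hb
  have := ((h1.const_mul (1/a)).add (h2.const_mul (1/a^2))).neg
  simp only [mul_zero, add_zero, neg_zero] at this
  refine this.congr (fun t => by ring)

lemma aux_t_deriv {a : ℝ} (ha : 0 < a) (t : ℝ) :
    HasDerivAt (fun t : ℝ => -(t/a + 1/a^2) * Real.exp (-a*t)) (t * Real.exp (-a*t)) t := by
  have h1 : HasDerivAt (fun t : ℝ => -(t/a + 1/a^2)) (-(1/a)) t := by
    have := (((hasDerivAt_id t).div_const a).add_const (1/a^2)).neg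
    exact this
  have h2 : HasDerivAt (fun t : ℝ => Real.exp (-a*t)) (Real.exp (-a*t) * (-a)) t := by
    have hlin : HasDerivAt (fun t : ℝ => -a*t) (-a) t := by
      simpa using (hasDerivAt_id t).const_mul (-a)
    exact (Real.hasDerivAt_exp _).comp t hlin
  have := h1.mul h2
  refine this.congr_deriv ?_
  have : a ≠ 0 := ne_of_gt ha
  field_simp
  ring

lemma aux_t_integral {a : ℝ} (ha : 0 < a) :
    ∫ t in Set.Ioi (0:ℝ), t * Real.exp (-a*t) = 1/a^2 := by
  have h := integral_Ioi_of_hasDerivAt_of_nonneg' (g := fun t : ℝ => -(t/a + 1/a^2) * Real.exp (-a*t))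
    (g' := fun t => t * Real.exp (-a*t)) (a := 0) (l := 0)
    (fun x _ => aux_t_deriv ha x) (fun x hx => mul_nonneg (le_of_lt hx) (Real.exp_pos _).le)
    (aux_t_tendsto ha)
  rw [h]
  simp

lemma aux_t_integrable {a : ℝ} (ha : 0 < a) :
    IntegrableOn (fun t => t * Real.exp (-a*t)) (Set.Ioi (0:ℝ)) :=
  integrableOn_Ioi_deriv_of_nonneg' (fun x _ => aux_t_deriv ha x)
    (fun x hx => mul_nonneg (le_of_lt hx) (Real.exp_pos _).le) (aux_t_tendsto ha)

lemma aux_ratio (c h s u : ℝ) (hs : 0 < s) (h1u : 0 < 1 - u)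
    (hsq : s^2 = c^2 - u) (hsinh : h^2 = c^2 - 1) :
    c / s^3 = (c * ((1-u)*s) - h * ((1-u)*(2*c*h/(2*s)))) / ((1-u)*s)^2 := by
  have hs' : s ≠ 0 := ne_of_gt hs
  have h1u' : (1-u) ≠ 0 := ne_of_gt h1u
  field_simp
  linear_combination (-c) * hsq + c * hsinh

lemma aux_v_deriv {u : ℝ} (hu0 : 0 < u) (hu1 : u < 1) (v : ℝ) :
    HasDerivAt (fun v : ℝ => Real.sinh v / ((1-u) * Real.sqrt (Real.cosh v ^ 2 - u)))
      (Real.cosh v / (Real.sqrt (Real.cosh v ^ 2 - u))^3) v := by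
  have h1u : (0:ℝ) < 1 - u := by linarith
  have hW : (0:ℝ) < Real.cosh v ^ 2 - u := by nlinarith [Real.one_le_cosh v]
  have hs : (0:ℝ) < Real.sqrt (Real.cosh v ^ 2 - u) := Real.sqrt_pos.2 hW
  have hsq : Real.sqrt (Real.cosh v ^ 2 - u) ^ 2 = Real.cosh v ^ 2 - u := Real.sq_sqrt hW.le
  have hWd : HasDerivAt (fun v : ℝ => Real.cosh v ^ 2 - u)
      (2 * Real.cosh v * Real.sinh v) v := by
    have := ((Real.hasDerivAt_cosh v).pow 2).sub_const u
    refine this.congr_deriv ?_; ring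
  have hsd : HasDerivAt (fun v : ℝ => Real.sqrt (Real.cosh v ^ 2 - u))
      ((2 * Real.cosh v * Real.sinh v) / (2 * Real.sqrt (Real.cosh v ^ 2 - u))) v := by
    have := (Real.hasDerivAt_sqrt (ne_of_gt hW)).comp v hWd
    refine this.congr_deriv ?_; field_simp
  have hden : HasDerivAt (fun v : ℝ => (1-u) * Real.sqrt (Real.cosh v ^ 2 - u))
      ((1-u) * ((2 * Real.cosh v * Real.sinh v) / (2 * Real.sqrt (Real.cosh v ^ 2 - u)))) v :=
    hsd.const_mul (1-u)
  have hd := (Real.hasDerivAt_sinh v).div hden (by positivity)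
  refine hd.congr_deriv ?_
  exact (aux_ratio _ _ _ _ hs h1u hsq (Real.sinh_sq v)).symm

lemma aux_key_tendsto {c : ℝ} (hc : 0 < c) :
    Tendsto (fun x : ℝ => x / Real.sqrt (x^2 + c)) atTop (nhds 1) := by
  have hx2 : Tendsto (fun x : ℝ => x^2) atTop atTop := tendsto_pow_atTop two_ne_zero
  have h0 : Tendsto (fun x : ℝ => c / x^2) atTop (nhds 0) :=
    Tendsto.div_atTop tendsto_const_nhds hx2
  have h1 : Tendsto (fun x : ℝ => 1 + c / x^2) atTop (nhds 1) := by
    have := h0.const_add (1:ℝ); simpa using this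
  have h2 : Tendsto (fun x : ℝ => Real.sqrt (1 + c / x^2)) atTop (nhds 1) := by
    have := (Real.continuous_sqrt.tendsto 1).comp h1
    simpa [Function.comp_def] using this
  have h3 : Tendsto (fun x : ℝ => 1 / Real.sqrt (1 + c / x^2)) atTop (nhds 1) := by
    have := h2.inv₀ (one_ne_zero); simpa using this
  refine h3.congr' ?_
  filter_upwards [eventually_gt_atTop (0:ℝ)] with x hx
  have hxx : Real.sqrt (x^2 + c) = x * Real.sqrt (1 + c/x^2) := by
    rw [← Real.sqrt_sq hx.le, ← Real.sqrt_mul (by positivity)]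
    congr 1
    field_simp
    rw [Real.sqrt_sq hx.le]
  rw [hxx, one_div, eq_div_iff (by positivity)]
  rw [mul_comm x, inv_mul_cancel_left₀ (by positivity)]

lemma aux_sinh_atTop : Tendsto Real.sinh atTop atTop := by
  refine tendsto_atTop_mono' atTop ?_ tendsto_id
  filter_upwards [eventually_ge_atTop (0:ℝ)] with x hx
  exact (Real.self_le_sinh_iff.2 hx)

lemma aux_v_tendsto {u : ℝ} (hu0 : 0 < u) (hu1 : u < 1) :
    Tendsto (fun v : ℝ => Real.sinh v / ((1-u) * Real.sqrt (Real.cosh v ^ 2 - u)))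
      atTop (nhds (1/(1-u))) := by
  have h1u : (0:ℝ) < 1 - u := by linarith
  have hkey := (aux_key_tendsto h1u).comp aux_sinh_atTop
  have := hkey.const_mul (1/(1-u))
  simp only [mul_one] at this
  refine this.congr (fun v => ?_)
  have : Real.cosh v ^ 2 - u = Real.sinh v ^ 2 + (1-u) := by
    have := Real.cosh_sq v; linarith
  rw [this]
  simp only [Function.comp]
  field_simp

section
variable {a b : ℝ}

lemma aux_theta_deriv (ha : 1 ≤ a) (hb0 : 0 < b) (hb1 : b < 1) (θ : ℝ) :
    HasDerivAt (fun θ : ℝ =>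
      b * Real.sin θ / ((a^2-b^2) * (a - b*Real.cos θ))
      + a/(a^2-b^2) * ((θ + 2 * Real.arctan (b * Real.sin θ /
          (a + Real.sqrt (a^2-b^2) - b*Real.cos θ)))/Real.sqrt (a^2-b^2)))
      (1/(a - b*Real.cos θ)^2) θ := by
  set s := Real.sqrt (a^2-b^2) with hs_def
  have hD : (0:ℝ) < a^2 - b^2 := by nlinarith
  have hs : 0 < s := Real.sqrt_pos.2 hD
  have hsq : s^2 = a^2 - b^2 := Real.sq_sqrt hD.le
  set c := Real.cos θ with hc_def
  set t := Real.sin θ with ht_def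
  have ht : t^2 = 1 - c^2 := by
    rw [ht_def, hc_def, Real.sin_sq]
  have hA : 0 < a - b*c := by nlinarith [Real.neg_one_le_cos θ, Real.cos_le_one θ]
  have hE : 0 < a + s - b*c := by nlinarith [Real.neg_one_le_cos θ, Real.cos_le_one θ]
  -- derivative of first part
  have h1 : HasDerivAt (fun θ : ℝ => b * Real.sin θ / ((a^2-b^2) * (a - b*Real.cos θ)))
      ((b*c*((a^2-b^2)*(a-b*c)) - b*t*((a^2-b^2)*(b*t)))/((a^2-b^2)*(a-b*c))^2) θ := by
    have hnum : HasDerivAt (fun θ : ℝ => b * Real.sin θ) (b * c) θ :=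
      (Real.hasDerivAt_sin θ).const_mul b
    have hden : HasDerivAt (fun θ : ℝ => (a^2-b^2) * (a - b*Real.cos θ)) ((a^2-b^2)*(b*t)) θ := by
      have : HasDerivAt (fun θ : ℝ => a - b*Real.cos θ) (b*t) θ := by
        have := ((Real.hasDerivAt_cos θ).const_mul b).const_sub a
        refine this.congr_deriv ?_; rw [ht_def]; ring
      exact this.const_mul _
    have := hnum.div hden (by positivity)
    exact this
  -- derivative of the quotient inside arctan
  have hq : HasDerivAt (fun θ : ℝ => b * Real.sin θ / (a + s - b*Real.cos θ))
      ((b*c*(a+s-b*c) - b*t*(b*t))/(a+s-b*c)^2) θ := by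
    have hnum : HasDerivAt (fun θ : ℝ => b * Real.sin θ) (b * c) θ :=
      (Real.hasDerivAt_sin θ).const_mul b
    have hden : HasDerivAt (fun θ : ℝ => a + s - b*Real.cos θ) (b*t) θ := by
      have := ((Real.hasDerivAt_cos θ).const_mul b).const_sub (a + s)
      refine this.congr_deriv ?_; rw [ht_def]; ring
    exact hnum.div hden (by positivity)
  -- derivative of arctan part with simplified value
  have harctan : HasDerivAt (fun θ : ℝ => Real.arctan (b * Real.sin θ / (a + s - b*Real.cos θ)))
      (b*(c*(a+s)-b)/(2*(a+s)*(a-b*c))) θ := by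
    have comp := (Real.hasDerivAt_arctan (b * t / (a + s - b*c))).comp θ hq
    refine comp.congr_deriv ?_
    have hEsq : (a+s-b*c)^2 + (b*t)^2 = 2*(a+s)*(a-b*c) := by
      linear_combination ht * b^2 + hsq
    have h1q : 1 + (b*t/(a+s-b*c))^2 = 2*(a+s)*(a-b*c)/(a+s-b*c)^2 := by
      field_simp
      linear_combination hEsq
    have hnum2 : b*c*(a+s-b*c) - b*t*(b*t) = b*(c*(a+s)-b) := by
      linear_combination (-b^2) * ht
    rw [h1q, hnum2]
    have hE2 : (0:ℝ) < (a+s-b*c)^2 := by positivity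
    have haspos : 0 < a + s := by nlinarith
    field_simp
  -- assemble
  have h2 : HasDerivAt (fun θ : ℝ => a/(a^2-b^2) * ((θ + 2 * Real.arctan (b * Real.sin θ /
      (a + s - b*Real.cos θ)))/s))
      (a/(a^2-b^2) * ((1 + 2 * (b*(c*(a+s)-b)/(2*(a+s)*(a-b*c))))/s)) θ := by
    have := ((hasDerivAt_id θ).add ((harctan.const_mul 2))).div_const s
    exact this.const_mul _
  have hsum := h1.add h2
  refine hsum.congr_deriv ?_
  have haspos : 0 < a + s := by nlinarith
  have hF : (1 + 2*(b*(c*(a+s)-b)/(2*(a+s)*(a-b*c))))/s = 1/(a-b*c) := by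
    field_simp
    linear_combination (-1) * hsq
  rw [hF]
  have hD' : (a^2 - b^2) ≠ 0 := ne_of_gt hD
  have hA' : (a - b*c) ≠ 0 := ne_of_gt hA
  field_simp
  linear_combination (-b^2) * ht

end

lemma aux_theta_integral (ha : 1 ≤ a) (hb0 : 0 < b) (hb1 : b < 1) :
    ∫ θ in (0:ℝ)..π, 1/(a - b*Real.cos θ)^2
      = π * a / (Real.sqrt (a^2-b^2))^3 := by
  have hD : (0:ℝ) < a^2 - b^2 := by nlinarith
  have hs : 0 < Real.sqrt (a^2-b^2) := Real.sqrt_pos.2 hD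
  have hsq : Real.sqrt (a^2-b^2)^2 = a^2 - b^2 := Real.sq_sqrt hD.le
  have hcont : Continuous (fun θ : ℝ => 1/(a - b*Real.cos θ)^2) := by
    apply continuous_const.div
    · exact ((continuous_const.sub (continuous_const.mul Real.continuous_cos)).pow 2)
    · intro x
      have : 0 < a - b * Real.cos x := by
        nlinarith [Real.neg_one_le_cos x, Real.cos_le_one x]
      positivity
  have := intervalIntegral.integral_eq_sub_of_hasDerivAt
    (f := fun θ : ℝ =>
      b * Real.sin θ / ((a^2-b^2) * (a - b*Real.cos θ))
      + a/(a^2-b^2) * ((θ + 2 * Real.arctan (b * Real.sin θ /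
          (a + Real.sqrt (a^2-b^2) - b*Real.cos θ)))/Real.sqrt (a^2-b^2)))
    (f' := fun θ : ℝ => 1/(a - b*Real.cos θ)^2) (a := 0) (b := π)
    (fun x _ => aux_theta_deriv ha hb0 hb1 x)
    (hcont.intervalIntegrable 0 π)
  rw [this]
  simp [Real.sin_pi, Real.sin_zero, Real.cos_pi, Real.cos_zero, Real.arctan_zero]
  field_simp
  linear_combination hsq

open Set Filter Topology in
lemma aux_I0_eq (x : ℝ) : I0 x = ∫ θ in Set.Ioc (0:ℝ) π, (1/π) * Real.exp (x * Real.cos θ) := by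
  rw [I0, intervalIntegral.integral_of_le Real.pi_pos.le, ← integral_const_mul]

open Set Filter Topology in
lemma aux_measurable_I0 : Measurable I0 := by
  have hc : Continuous (fun p : ℝ × ℝ => (1/π) * Real.exp (p.1 * Real.cos p.2)) := by
    exact continuous_const.mul ((continuous_fst.mul (Real.continuous_cos.comp continuous_snd)).rexp)
  have sm : StronglyMeasurable (fun t : ℝ =>
      ∫ θ in Set.Ioc (0:ℝ) π, (1/π) * Real.exp (t * Real.cos θ)) :=
    (hc.stronglyMeasurable).integral_prod_right'
  have : I0 = fun t => ∫ θ in Set.Ioc (0:ℝ) π, (1/π) * Real.exp (t * Real.cos θ) := by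
    funext t; exact aux_I0_eq t
  rw [this]; exact sm.measurable

open Set Filter Topology in
lemma aux_measurable_K0 : Measurable K0 := by
  have hc : Continuous (fun p : ℝ × ℝ => Real.exp (-p.1 * Real.cosh p.2)) := by
    exact ((continuous_fst.neg.mul (Real.continuous_cosh.comp continuous_snd)).rexp)
  exact ((hc.stronglyMeasurable).integral_prod_right').measurable

open Set Filter Topology in
lemma aux_I0_nonneg (x : ℝ) : 0 ≤ I0 x := by
  rw [I0]
  apply mul_nonneg (by positivity)
  apply intervalIntegral.integral_nonneg Real.pi_pos.le
  intro θ _; positivity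

open Set Filter Topology in
lemma aux_K0_nonneg (x : ℝ) : 0 ≤ K0 x := by
  rw [K0]
  exact setIntegral_nonneg measurableSet_Ioi (fun v _ => (Real.exp_pos _).le)

open Set Filter Topology in
lemma aux_K0_integrable {t : ℝ} (ht : 0 < t) :
    IntegrableOn (fun v => Real.exp (-t * Real.cosh v)) (Set.Ioi (0:ℝ)) := by
  refine Integrable.mono' (exp_neg_integrableOn_Ioi 0 ht)
    (((continuous_const.mul Real.continuous_cosh).rexp).aestronglyMeasurable) ?_
  filter_upwards [ae_restrict_mem measurableSet_Ioi] with v hv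
  rw [Real.norm_eq_abs, abs_of_pos (Real.exp_pos _)]
  apply Real.exp_le_exp.2
  have h1 : v ≤ Real.cosh v := by
    calc v ≤ Real.sinh v := Real.self_le_sinh_iff.2 (le_of_lt hv)
    _ ≤ Real.cosh v := (Real.sinh_lt_cosh v).le
  nlinarith

open Set Filter Topology in
lemma aux_ofReal_K0 {t : ℝ} (ht : 0 < t) :
    ENNReal.ofReal (K0 t) = ∫⁻ v in Set.Ioi (0:ℝ), ENNReal.ofReal (Real.exp (-t * Real.cosh v)) := by
  rw [K0]
  exact ofReal_integral_eq_lintegral_ofReal (aux_K0_integrable ht)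
    (ae_of_all _ fun v => (Real.exp_pos _).le)

open Set Filter Topology in
lemma aux_ofReal_I0 (x : ℝ) :
    ENNReal.ofReal (I0 x) = ∫⁻ θ in Set.Ioc (0:ℝ) π, ENNReal.ofReal ((1/π) * Real.exp (x * Real.cos θ)) := by
  rw [aux_I0_eq]
  refine ofReal_integral_eq_lintegral_ofReal ?_ (ae_of_all _ fun θ => by positivity)
  have : Continuous (fun θ : ℝ => (1/π) * Real.exp (x * Real.cos θ)) := by
    exact continuous_const.mul ((continuous_const.mul Real.continuous_cos).rexp)
  exact this.integrableOn_Ioc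
end WSaux

theorem weber_schafheitlin_I0K0 (u : ℝ) (hu0 : 0 < u) (hu1 : u < 1) :
    ∫ t in Set.Ioi (0:ℝ), I0 (Real.sqrt u * t) * K0 t * t = 1 / (1 - u) := by
  have hπ : (0:ℝ) < π := Real.pi_pos
  set b := Real.sqrt u with hb_def
  have hb0 : 0 < b := Real.sqrt_pos.2 hu0
  have hbsq : b^2 = u := Real.sq_sqrt hu0.le
  have hb1 : b < 1 := by nlinarith [hbsq, hu1, hb0]
  have h1u : (0:ℝ) < 1 - u := by linarith
  have hA : ∀ v θ : ℝ, 0 < Real.cosh v - b * Real.cos θ := fun v θ => by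
    nlinarith [Real.one_le_cosh v, Real.neg_one_le_cos θ, Real.cos_le_one θ]
  have hmeas : AEStronglyMeasurable (fun t => I0 (b * t) * K0 t * t)
      (volume.restrict (Set.Ioi (0:ℝ))) :=
    (((aux_measurable_I0.comp (measurable_id.const_mul b)).mul aux_measurable_K0).mul
      measurable_id).aestronglyMeasurable
  have hnn : 0 ≤ᵐ[volume.restrict (Set.Ioi (0:ℝ))] fun t => I0 (b * t) * K0 t * t := by
    filter_upwards [ae_restrict_mem measurableSet_Ioi] with t ht
    exact mul_nonneg (mul_nonneg (aux_I0_nonneg _) (aux_K0_nonneg _)) ht.le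
  rw [MeasureTheory.integral_eq_lintegral_of_nonneg_ae hnn hmeas]
  have key : (∫⁻ t in Set.Ioi (0:ℝ), ENNReal.ofReal (I0 (b * t) * K0 t * t))
      = ENNReal.ofReal (1/(1-u)) := by
    calc ∫⁻ t in Set.Ioi (0:ℝ), ENNReal.ofReal (I0 (b * t) * K0 t * t)
        = ∫⁻ t in Set.Ioi (0:ℝ), ∫⁻ v in Set.Ioi (0:ℝ),
            ENNReal.ofReal (I0 (b * t) * t) * ENNReal.ofReal (Real.exp (-t * Real.cosh v)) := by
          refine MeasureTheory.setLIntegral_congr_fun_ae measurableSet_Ioi (Filter.Eventually.of_forall fun t ht => ?_)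
          rw [show I0 (b*t) * K0 t * t = (I0 (b*t) * t) * K0 t from by ring,
            ENNReal.ofReal_mul (mul_nonneg (aux_I0_nonneg _) ht.le), aux_ofReal_K0 ht,
            ← MeasureTheory.lintegral_const_mul' _ _ ENNReal.ofReal_ne_top]
      _ = ∫⁻ v in Set.Ioi (0:ℝ), ∫⁻ t in Set.Ioi (0:ℝ),
            ENNReal.ofReal (I0 (b * t) * t) * ENNReal.ofReal (Real.exp (-t * Real.cosh v)) := by
          refine MeasureTheory.lintegral_lintegral_swap ?_
          have m1 : Measurable fun p : ℝ × ℝ => I0 (b * p.1) * p.1 :=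
            (aux_measurable_I0.comp (measurable_fst.const_mul b)).mul measurable_fst
          have m2 : Measurable fun p : ℝ × ℝ => Real.exp (-p.1 * Real.cosh p.2) := by
            have : Continuous fun p : ℝ × ℝ => Real.exp (-p.1 * Real.cosh p.2) :=
              ((continuous_fst.neg.mul (Real.continuous_cosh.comp continuous_snd)).rexp)
            exact this.measurable
          exact (m1.ennreal_ofReal.mul m2.ennreal_ofReal).aemeasurable
      _ = ∫⁻ v in Set.Ioi (0:ℝ), ENNReal.ofReal (Real.cosh v / (Real.sqrt (Real.cosh v ^ 2 - u))^3) := by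
          refine MeasureTheory.setLIntegral_congr_fun_ae measurableSet_Ioi (Filter.Eventually.of_forall fun v _ => ?_)
          calc ∫⁻ t in Set.Ioi (0:ℝ),
                ENNReal.ofReal (I0 (b * t) * t) * ENNReal.ofReal (Real.exp (-t * Real.cosh v))
              = ∫⁻ t in Set.Ioi (0:ℝ), ∫⁻ θ in Set.Ioc (0:ℝ) π,
                  ENNReal.ofReal ((1/π) * (t * Real.exp (-(Real.cosh v - b * Real.cos θ) * t))) := by
                refine MeasureTheory.setLIntegral_congr_fun_ae measurableSet_Ioi (Filter.Eventually.of_forall fun t ht => ?_)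
                rw [ENNReal.ofReal_mul (aux_I0_nonneg _), mul_assoc,
                  ← ENNReal.ofReal_mul ht.le, aux_ofReal_I0 (b*t),
                  ← MeasureTheory.lintegral_mul_const' _ _ ENNReal.ofReal_ne_top]
                refine MeasureTheory.setLIntegral_congr_fun_ae measurableSet_Ioc (Filter.Eventually.of_forall fun θ _ => ?_)
                rw [← ENNReal.ofReal_mul (by positivity)]
                congr 1
                rw [show -(Real.cosh v - b * Real.cos θ) * t = b*t*Real.cos θ + (-t*Real.cosh v) from by ring,
                  Real.exp_add]
                ring
            _ = ∫⁻ θ in Set.Ioc (0:ℝ) π, ∫⁻ t in Set.Ioi (0:ℝ),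
                  ENNReal.ofReal ((1/π) * (t * Real.exp (-(Real.cosh v - b * Real.cos θ) * t))) := by
                refine MeasureTheory.lintegral_lintegral_swap ?_
                have : Continuous fun p : ℝ × ℝ =>
                    (1/π) * (p.1 * Real.exp (-(Real.cosh v - b * Real.cos p.2) * p.1)) := by
                  apply continuous_const.mul
                  exact continuous_fst.mul
                    (((continuous_const.sub (continuous_const.mul (Real.continuous_cos.comp continuous_snd))).neg.mul continuous_fst).rexp)
                exact (this.measurable.ennreal_ofReal).aemeasurable
            _ = ∫⁻ θ in Set.Ioc (0:ℝ) π,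
                  ENNReal.ofReal ((1/π) * (1/(Real.cosh v - b * Real.cos θ)^2)) := by
                refine MeasureTheory.setLIntegral_congr_fun_ae measurableSet_Ioc (Filter.Eventually.of_forall fun θ _ => ?_)
                rw [← MeasureTheory.ofReal_integral_eq_lintegral_ofReal
                  (((aux_t_integrable (hA v θ))).const_mul (1/π))
                  (by filter_upwards [ae_restrict_mem measurableSet_Ioi] with t ht
                      have h0 : (0:ℝ) < t := ht
                      positivity)]
                congr 1
                rw [MeasureTheory.integral_const_mul, aux_t_integral (hA v θ)]
            _ = ENNReal.ofReal (Real.cosh v / (Real.sqrt (Real.cosh v ^ 2 - u))^3) := by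
                have hcont : Continuous (fun θ : ℝ => 1/π * (1/(Real.cosh v - b * Real.cos θ)^2)) := by
                  apply continuous_const.mul
                  apply continuous_const.div
                  · exact (continuous_const.sub (continuous_const.mul Real.continuous_cos)).pow 2
                  · intro x
                    have := hA v x
                    positivity
                rw [← MeasureTheory.ofReal_integral_eq_lintegral_ofReal hcont.integrableOn_Ioc
                  (Filter.Eventually.of_forall fun θ => by have := hA v θ; positivity)]
                congr 1
                rw [← intervalIntegral.integral_of_le Real.pi_pos.le,
                  intervalIntegral.integral_const_mul,
                  aux_theta_integral (Real.one_le_cosh v) hb0 hb1, hbsq]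
                field_simp
      _ = ENNReal.ofReal (1/(1-u)) := by
          have hd : ∀ x ∈ Set.Ici (0:ℝ), HasDerivAt
              (fun v => Real.sinh v / ((1-u) * Real.sqrt (Real.cosh v ^ 2 - u)))
              (Real.cosh x / (Real.sqrt (Real.cosh x ^ 2 - u))^3) x :=
            fun x _ => aux_v_deriv hu0 hu1 x
          have hpos : ∀ x ∈ Set.Ioi (0:ℝ), 0 ≤ Real.cosh x / (Real.sqrt (Real.cosh x ^ 2 - u))^3 :=
            fun x _ => div_nonneg (Real.cosh_pos _).le (by positivity)
          rw [← MeasureTheory.ofReal_integral_eq_lintegral_ofReal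
            (integrableOn_Ioi_deriv_of_nonneg' hd hpos (aux_v_tendsto hu0 hu1))
            (Filter.Eventually.of_forall fun x => div_nonneg (Real.cosh_pos _).le (by positivity))]
          congr 1
          rw [integral_Ioi_of_hasDerivAt_of_nonneg' hd hpos (aux_v_tendsto hu0 hu1)]
          simp [Real.sinh_zero]
  rw [key, ENNReal.toReal_ofReal (by positivity)]
end

section
/- For all real u with 0 < u < 1 we have ∫_0^∞ I_1(√u·t)·K_0(t) dt = -log(1-u)/(2√u), where I_1 = I_0' is the modified Bessel function of the first kind of order one. -/
open MeasureTheory Real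

open Filter Topology

lemma hasDerivAt_I0 (s : ℝ) :
    HasDerivAt I0 ((1/π) * ∫ θ in (0:ℝ)..π, Real.cos θ * Real.exp (s * Real.cos θ)) s := by
  have key := intervalIntegral.hasDerivAt_integral_of_dominated_loc_of_deriv_le
    (μ := volume) (a := (0:ℝ)) (b := π)
    (F := fun x θ => Real.exp (x * Real.cos θ))
    (F' := fun x θ => Real.cos θ * Real.exp (x * Real.cos θ))
    (x₀ := s) (s := Metric.ball s 1) (bound := fun _ => Real.exp (|s| + 1)) (Metric.ball_mem_nhds s one_pos)
    (Filter.Eventually.of_forall fun x =>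
      (Continuous.aestronglyMeasurable (by continuity)))
    ((Continuous.intervalIntegrable (by continuity) _ _))
    (Continuous.aestronglyMeasurable (by continuity))
    (Filter.Eventually.of_forall fun θ => fun _ x hx => ?_)
    (intervalIntegrable_const)
    (Filter.Eventually.of_forall fun θ => fun _ x _ => ?_)
  · exact (key.2.const_mul (1/π))
  · have h1 : |Real.cos θ| ≤ 1 := Real.abs_cos_le_one θ
    have hx' : |x| ≤ |s| + 1 := by
      have := abs_sub_abs_le_abs_sub x s
      rw [Metric.mem_ball, Real.dist_eq] at hx
      linarith
    have h2 : x * Real.cos θ ≤ |s| + 1 := by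
      calc x * Real.cos θ ≤ |x * Real.cos θ| := le_abs_self _
        _ = |x| * |Real.cos θ| := abs_mul _ _
        _ ≤ (|s| + 1) * 1 := by
            apply mul_le_mul hx' h1 (abs_nonneg _) (by positivity)
        _ = |s| + 1 := by ring
    calc ‖Real.cos θ * Real.exp (x * Real.cos θ)‖
        = |Real.cos θ| * Real.exp (x * Real.cos θ) := by
          rw [norm_mul, Real.norm_eq_abs, Real.norm_eq_abs, Real.abs_exp]
      _ ≤ 1 * Real.exp (|s| + 1) := by
          apply mul_le_mul h1 (Real.exp_le_exp.2 h2) (Real.exp_pos _).le one_pos.le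
      _ = Real.exp (|s| + 1) := one_mul _
  · have := ((hasDerivAt_id x).mul_const (Real.cos θ)).exp
    simpa [mul_comm] using this

lemma I1_eq (s : ℝ) : I1 s = (1/π) * ∫ θ in (0:ℝ)..π, Real.cos θ * Real.exp (s * Real.cos θ) :=
  (hasDerivAt_I0 s).deriv

lemma abs_I1_le (s : ℝ) : |I1 s| ≤ Real.exp |s| := by
  rw [I1_eq]
  have h : ∀ θ ∈ Set.uIcc (0:ℝ) π, ‖Real.cos θ * Real.exp (s * Real.cos θ)‖ ≤ Real.exp |s| := by
    intro θ _
    have h1 : |Real.cos θ| ≤ 1 := Real.abs_cos_le_one θ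
    have h2 : s * Real.cos θ ≤ |s| := by
      calc s * Real.cos θ ≤ |s * Real.cos θ| := le_abs_self _
        _ = |s| * |Real.cos θ| := abs_mul _ _
        _ ≤ |s| * 1 := by apply mul_le_mul_of_nonneg_left h1 (abs_nonneg _)
        _ = |s| := mul_one _
    calc ‖Real.cos θ * Real.exp (s * Real.cos θ)‖
        = |Real.cos θ| * Real.exp (s * Real.cos θ) := by
          rw [norm_mul, Real.norm_eq_abs, Real.norm_eq_abs, Real.abs_exp]
      _ ≤ 1 * Real.exp |s| := by
          apply mul_le_mul h1 (Real.exp_le_exp.2 h2) (Real.exp_pos _).le one_pos.le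
      _ = Real.exp |s| := one_mul _
  have hb : ‖∫ θ in (0:ℝ)..π, Real.cos θ * Real.exp (s * Real.cos θ)‖ ≤ Real.exp |s| * |π - 0| := by
    apply intervalIntegral.norm_integral_le_of_norm_le_const
    intro x hx
    exact h x (Set.uIoc_subset_uIcc hx)
  rw [Real.norm_eq_abs] at hb
  have hpi : |π - 0| = π := by rw [sub_zero, abs_of_pos Real.pi_pos]
  rw [hpi] at hb
  rw [abs_mul, abs_of_pos (by positivity : (0:ℝ) < 1/π)]
  calc 1/π * |∫ θ in (0:ℝ)..π, Real.cos θ * Real.exp (s * Real.cos θ)|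
      ≤ 1/π * (Real.exp |s| * π) := by
        apply mul_le_mul_of_nonneg_left hb (by positivity)
    _ = Real.exp |s| := by field_simp

lemma integral_exp_neg_mul {b : ℝ} (hb : 0 < b) :
    ∫ t in Set.Ioi (0:ℝ), Real.exp (-(b * t)) = 1 / b := by
  have h := integral_Ioi_of_hasDerivAt_of_tendsto' (a := 0)
    (f := fun t => -Real.exp (-(b * t)) / b)
    (f' := fun t => Real.exp (-(b * t)))
    (m := 0)
    (fun x _ => by
      have : HasDerivAt (fun t : ℝ => -Real.exp (-(b * t)) / b)
          (-(Real.exp (-(b * id x)) * -(b * 1)) / b) x :=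
        (((hasDerivAt_id x).const_mul b).neg.exp.neg).div_const b
      refine this.congr_deriv ?_
      field_simp
      rfl)
    (by simpa [neg_mul] using exp_neg_integrableOn_Ioi 0 hb)
    (by
      have h1 : Tendsto (fun t : ℝ => -Real.exp (-(b * t)) / b) atTop (𝓝 (-0 / b)) := by
        apply Tendsto.div_const
        apply Tendsto.neg
        apply Real.tendsto_exp_atBot.comp
        have := Tendsto.const_mul_atTop_of_neg (show (-b) < 0 by linarith) (tendsto_id (α := ℝ))
        simpa [neg_mul] using this
      simpa using h1)
  rw [h]
  field_simp
  simp

lemma exp_aux {b : ℝ} (hb : 0 < b) :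
    MeasureTheory.IntegrableOn (fun t : ℝ => Real.exp (-(b*t))) (Set.Ioi 0) := by
  have h := exp_neg_integrableOn_Ioi 0 hb
  have he : (fun x : ℝ => Real.exp (-b * x)) = fun t : ℝ => Real.exp (-(b*t)) := by
    funext x; rw [neg_mul]
  rwa [he] at h

lemma integral_cos_div {a c : ℝ} (ha0 : 0 < a) (ha1 : a < 1) (hc : 1 < c) :
    ∫ θ in (0:ℝ)..π, Real.cos θ / (c - a * Real.cos θ)
      = π / a * (c / Real.sqrt (c^2 - a^2) - 1) := by
  set D := Real.sqrt (c^2 - a^2) with hD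
  have hca : a < c := by linarith
  have hpos : 0 < c^2 - a^2 := by nlinarith
  have hD2 : D^2 = c^2 - a^2 := Real.sq_sqrt hpos.le
  have hD0 : 0 < D := Real.sqrt_pos.2 hpos
  have hM : ∀ θ : ℝ, 0 < c + D - a * Real.cos θ := by
    intro θ
    have : a * Real.cos θ ≤ a := by
      nlinarith [Real.cos_le_one θ, Real.neg_one_le_cos θ]
    linarith
  have hden : ∀ θ : ℝ, 0 < c - a * Real.cos θ := by
    intro θ
    have : a * Real.cos θ ≤ a := by
      nlinarith [Real.cos_le_one θ, Real.neg_one_le_cos θ]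
    linarith
  set G : ℝ → ℝ := fun θ =>
    c/(a*D) * (θ + 2 * Real.arctan (a * Real.sin θ / (c + D - a * Real.cos θ))) - θ/a with hG
  have hderiv : ∀ θ : ℝ, HasDerivAt G (Real.cos θ / (c - a * Real.cos θ)) θ := by
    intro θ
    have hsin := Real.sin_sq_add_cos_sq θ
    have hMθ := hM θ
    have hdθ := hden θ
    have hnum : HasDerivAt (fun θ => a * Real.sin θ) (a * Real.cos θ) θ :=
      (Real.hasDerivAt_sin θ).const_mul a
    have hdenom : HasDerivAt (fun θ => c + D - a * Real.cos θ) (-(a * -Real.sin θ)) θ := by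
      exact (((Real.hasDerivAt_cos θ).const_mul a).neg).const_add (c + D)
    have hdiv := hnum.div hdenom hMθ.ne'
    have harctan := hdiv.arctan
    have hfull : HasDerivAt G
        ((c/(a*D)) * (1 + 2 * (1 / (1 + (a * Real.sin θ / (c + D - a * Real.cos θ)) ^ 2) *
            ((a * Real.cos θ * (c + D - a * Real.cos θ) -
            a * Real.sin θ * -(a * -Real.sin θ)) / (c + D - a * Real.cos θ)^2))) - 1/a) θ := by
      exact (((hasDerivAt_id θ).add (harctan.const_mul 2)).const_mul (c/(a*D))).sub
        ((hasDerivAt_id θ).div_const a)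
    convert hfull using 1
    have hstep : 1 / (1 + (a * Real.sin θ / (c + D - a * Real.cos θ)) ^ 2) *
        ((a * Real.cos θ * (c + D - a * Real.cos θ) -
        a * Real.sin θ * -(a * -Real.sin θ)) / (c + D - a * Real.cos θ)^2)
        = (a * ((c+D) * Real.cos θ - a)) / (2 * (c+D) * (c - a * Real.cos θ)) := by
      rw [one_div_mul_eq_div, div_div]
      have hd2 : (c + D - a * Real.cos θ)^2 * (1 + (a * Real.sin θ / (c + D - a * Real.cos θ))^2)
          = 2 * (c+D) * (c - a * Real.cos θ) := by
        field_simp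
        linear_combination (a^2) * hsin + hD2
      rw [hd2]
      congr 1
      linear_combination (-(a^2)) * hsin
    rw [hstep]
    have hP : (0:ℝ) < c + D := by linarith
    have hdθ' : c - Real.cos θ * a ≠ 0 := by linarith
    field_simp
    linear_combination c * hD2
  have hint : IntervalIntegrable (fun θ => Real.cos θ / (c - a * Real.cos θ)) volume 0 π := by
    apply Continuous.intervalIntegrable
    exact Real.continuous_cos.div (by continuity) (fun θ => (hden θ).ne')
  have := intervalIntegral.integral_eq_sub_of_hasDerivAt (fun θ _ => hderiv θ) hint
  rw [this, hG]
  simp [Real.sin_pi, Real.sin_zero, Real.arctan_zero]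
  field_simp

lemma integral_cosh_div {a : ℝ} (ha0 : 0 < a) (ha1 : a < 1) :
    ∫ v in Set.Ioi (0:ℝ), (Real.cosh v / Real.sqrt (Real.cosh v ^ 2 - a^2) - 1)
      = -Real.log (Real.sqrt (1 - a^2)) := by
  set m := Real.sqrt (1 - a^2) with hm
  have hm2 : m^2 = 1 - a^2 := Real.sq_sqrt (by nlinarith)
  have hm0 : 0 < m := Real.sqrt_pos.2 (by nlinarith)
  have hX : ∀ v : ℝ, 0 < Real.cosh v ^ 2 - a^2 := by
    intro v
    nlinarith [Real.one_le_cosh v]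
  have hXeq : ∀ v : ℝ, Real.cosh v ^ 2 - a^2 = m^2 + Real.sinh v ^ 2 := by
    intro v
    have := Real.cosh_sq v
    nlinarith
  -- derivative claim
  have hderiv : ∀ v : ℝ, HasDerivAt (fun v => Real.arsinh (Real.sinh v / m) - v)
      (Real.cosh v / Real.sqrt (Real.cosh v ^ 2 - a^2) - 1) v := by
    intro v
    have h1 : HasDerivAt (fun v => Real.arsinh (Real.sinh v / m))
        ((Real.sqrt (1 + (Real.sinh v / m) ^ 2))⁻¹ * (Real.cosh v / m)) v :=
      ((Real.hasDerivAt_sinh v).div_const m).arsinh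
    have h2 : Real.sqrt (1 + (Real.sinh v / m) ^ 2) = Real.sqrt (Real.cosh v ^ 2 - a^2) / m := by
      have h3 : 1 + (Real.sinh v / m) ^ 2 = (Real.cosh v ^ 2 - a^2) / m^2 := by
        rw [hXeq v]
        field_simp
      rw [h3, Real.sqrt_div (hX v).le, Real.sqrt_sq hm0.le]
    have h4 := (h1.sub (hasDerivAt_id v))
    refine h4.congr_deriv ?_
    rw [h2]
    have h5 : Real.sqrt (Real.cosh v ^ 2 - a^2) ≠ 0 := (Real.sqrt_pos.2 (hX v)).ne'
    field_simp
  -- integrability of the integrand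
  have hcont : Continuous (fun v => Real.cosh v / Real.sqrt (Real.cosh v ^ 2 - a^2) - 1) := by
    apply Continuous.sub _ continuous_const
    apply Real.continuous_cosh.div
    · exact (Real.continuous_sqrt.comp (by continuity))
    · intro v
      exact (Real.sqrt_pos.2 (hX v)).ne'
  have hintg : IntegrableOn (fun v => Real.cosh v / Real.sqrt (Real.cosh v ^ 2 - a^2) - 1)
      (Set.Ioi (0:ℝ)) := by
    apply Integrable.mono' (g := fun v => (2 * a^2 / m) * Real.exp (-(1:ℝ) * v))
    · exact (exp_neg_integrableOn_Ioi 0 one_pos).const_mul _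
    · exact hcont.aestronglyMeasurable.restrict
    · filter_upwards [ae_restrict_mem measurableSet_Ioi] with v hv
      have hc1 := Real.one_le_cosh v
      have hXv := hX v
      have hsX : m * Real.cosh v ≤ Real.sqrt (Real.cosh v ^ 2 - a^2) := by
        rw [show m * Real.cosh v = Real.sqrt ((m * Real.cosh v)^2) from
          (Real.sqrt_sq (by positivity)).symm]
        apply Real.sqrt_le_sqrt
        nlinarith [hm2, mul_nonneg (sq_nonneg a) (show (0:ℝ) ≤ Real.cosh v^2 - 1 by nlinarith [hc1])]
      have hsX0 : 0 < Real.sqrt (Real.cosh v ^ 2 - a^2) := Real.sqrt_pos.2 hXv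
      have heq : Real.cosh v / Real.sqrt (Real.cosh v ^ 2 - a^2) - 1
          = a^2 / (Real.sqrt (Real.cosh v ^ 2 - a^2) * (Real.cosh v + Real.sqrt (Real.cosh v ^ 2 - a^2))) := by
        rw [div_sub_one hsX0.ne', div_eq_div_iff hsX0.ne' (by positivity)]
        have := Real.sq_sqrt hXv.le
        nlinarith [this]
      have hnn : 0 ≤ Real.cosh v / Real.sqrt (Real.cosh v ^ 2 - a^2) - 1 := by
        rw [heq]; positivity
      rw [Real.norm_eq_abs, abs_of_nonneg hnn, heq]
      have hb1 : a^2 / (Real.sqrt (Real.cosh v ^ 2 - a^2) * (Real.cosh v + Real.sqrt (Real.cosh v ^ 2 - a^2)))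
          ≤ a^2 / (m * Real.cosh v * Real.cosh v) := by
        apply div_le_div_of_nonneg_left (by positivity) (by positivity)
        nlinarith
      have hb2 : a^2 / (m * Real.cosh v * Real.cosh v) ≤ (2 * a^2 / m) * Real.exp (-(1:ℝ) * v) := by
        rw [neg_one_mul]
        have h7 : Real.exp (-v) * Real.exp v = 1 := by rw [← Real.exp_add]; simp
        have hev : Real.exp v ≤ 2 * Real.cosh v := by
          rw [Real.cosh_eq]; nlinarith [Real.exp_pos (-v)]
        have h8 : (1:ℝ) ≤ 2 * Real.exp (-v) * Real.cosh v := by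
          calc (1:ℝ) = Real.exp (-v) * Real.exp v := h7.symm
            _ ≤ Real.exp (-v) * (2*Real.cosh v) :=
                mul_le_mul_of_nonneg_left hev (Real.exp_pos _).le
            _ = 2 * Real.exp (-v) * Real.cosh v := by ring
        rw [div_le_iff₀ (by positivity)]
        have h9 : (2 * a^2 / m) * Real.exp (-v) * (m * Real.cosh v * Real.cosh v)
            = a^2 * ((2 * Real.exp (-v) * Real.cosh v) * Real.cosh v) := by field_simp
        rw [h9]
        have h10 : (1:ℝ) * 1 ≤ (2 * Real.exp (-v) * Real.cosh v) * Real.cosh v :=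
          mul_le_mul h8 hc1 (by norm_num) (by positivity)
        nlinarith [sq_nonneg a]
      linarith
  -- tendsto
  have htend : Tendsto (fun v => Real.arsinh (Real.sinh v / m) - v) atTop (𝓝 (-Real.log m)) := by
    set g : ℝ → ℝ := fun v => (Real.sinh v + Real.sqrt (m^2 + Real.sinh v ^ 2)) * Real.exp (-v)
      with hgdef
    have h1 : Tendsto (fun v => Real.sinh v * Real.exp (-v)) atTop (𝓝 (1/2)) := by
      have heq : ∀ v : ℝ, Real.sinh v * Real.exp (-v) = (1 - (Real.exp (-v))^2)/2 := by
        intro v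
        have h7 : Real.exp v * Real.exp (-v) = 1 := by rw [← Real.exp_add]; simp
        rw [Real.sinh_eq]
        linear_combination h7/2
      have h0 := Real.tendsto_exp_neg_atTop_nhds_zero
      have := (tendsto_const_nhds (x := (1:ℝ)).sub (h0.pow 2)).div_const 2
      simp only [ne_eq, OfNat.ofNat_ne_zero, not_false_eq_true, zero_pow, sub_zero] at this
      exact Tendsto.congr (fun v => (heq v).symm) this
    have h2 : Tendsto (fun v => Real.sqrt (m^2 + Real.sinh v ^ 2) * Real.exp (-v)) atTop
        (𝓝 (1/2)) := by
      have heq : ∀ v : ℝ, Real.sqrt (m^2 + Real.sinh v ^ 2) * Real.exp (-v)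
          = Real.sqrt (m^2 * (Real.exp (-v))^2 + (Real.sinh v * Real.exp (-v))^2) := by
        intro v
        rw [show Real.exp (-v) = Real.sqrt ((Real.exp (-v))^2) from
          (Real.sqrt_sq (Real.exp_pos (-v)).le).symm]
        rw [← Real.sqrt_mul (by positivity)]
        rw [Real.sqrt_sq (Real.exp_pos (-v)).le]
        congr 1
        ring
      have hin : Tendsto (fun v => m^2 * (Real.exp (-v))^2 + (Real.sinh v * Real.exp (-v))^2)
          atTop (𝓝 (m^2 * 0^2 + (1/2)^2)) := by
        exact ((tendsto_const_nhds.mul (Real.tendsto_exp_neg_atTop_nhds_zero.pow 2)).add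
          (h1.pow 2))
      have hsq := (Real.continuous_sqrt.continuousAt (x := m^2 * 0^2 + (1/2:ℝ)^2)).tendsto.comp hin
      have hval : Real.sqrt (m^2 * 0^2 + (1/2:ℝ)^2) = 1/2 := by
        rw [show m^2 * 0^2 + (1/2:ℝ)^2 = (1/2)^2 by ring, Real.sqrt_sq (by norm_num)]
      rw [hval] at hsq
      exact Tendsto.congr (fun v => (heq v).symm) hsq
    have hg : Tendsto g atTop (𝓝 1) := by
      have := h1.add h2
      norm_num at this
      apply Tendsto.congr (f₁ := fun v => Real.sinh v * Real.exp (-v)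
        + Real.sqrt (m^2 + Real.sinh v ^ 2) * Real.exp (-v)) _ this
      intro v
      rw [hgdef]
      ring
    have hlog : Tendsto (fun v => Real.log (g v) - Real.log m) atTop (𝓝 (-Real.log m)) := by
      have := ((Real.continuousAt_log (x := 1) one_ne_zero).tendsto.comp hg).sub_const
        (Real.log m)
      simpa using this
    apply Tendsto.congr' _ hlog
    filter_upwards [eventually_gt_atTop (0:ℝ)] with v hv
    have hs0 : 0 < Real.sinh v := by positivity
    have hsqge : 0 ≤ Real.sqrt (m^2 + Real.sinh v ^ 2) := Real.sqrt_nonneg _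
    have hnum : 0 < Real.sinh v + Real.sqrt (m^2 + Real.sinh v ^ 2) := by linarith
    have h2' : Real.sqrt (1 + (Real.sinh v / m) ^ 2) = Real.sqrt (m^2 + Real.sinh v ^ 2) / m := by
      have h3 : 1 + (Real.sinh v / m) ^ 2 = (m^2 + Real.sinh v ^ 2) / m^2 := by field_simp
      rw [h3, Real.sqrt_div (by positivity), Real.sqrt_sq hm0.le]
    rw [Real.arsinh, h2', ← add_div, Real.log_div hnum.ne' hm0.ne']
    rw [hgdef]
    rw [Real.log_mul hnum.ne' (Real.exp_pos _).ne', Real.log_exp]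
    ring
  have := integral_Ioi_of_hasDerivAt_of_tendsto' (a := 0)
    (fun x _ => hderiv x) hintg htend
  rw [this]
  simp [Real.sinh_zero, Real.arsinh_zero]

lemma claim1 {a c : ℝ} (ha0 : 0 < a) (ha1 : a < 1) (hc : 1 < c) :
    ∫ t in Set.Ioi (0:ℝ), I1 (a*t) * Real.exp (-t * c)
      = 1/a * (c / Real.sqrt (c^2 - a^2) - 1) := by
  have hπ : (0:ℝ) < π := Real.pi_pos
  have step1 : ∀ t : ℝ, I1 (a*t) * Real.exp (-t*c)
      = (1/π) * ∫ θ in Set.Ioc (0:ℝ) π,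
          (Real.cos θ * Real.exp (a*t*Real.cos θ) * Real.exp (-t*c)) := by
    intro t
    rw [I1_eq, intervalIntegral.integral_of_le hπ.le, mul_assoc, ← integral_mul_const]
  simp only [step1]
  rw [integral_const_mul]
  have hInt : Integrable
      (fun p : ℝ × ℝ => Real.cos p.2 * Real.exp (a*p.1*Real.cos p.2) * Real.exp (-p.1*c))
      ((volume.restrict (Set.Ioi 0)).prod (volume.restrict (Set.Ioc 0 π))) := by
    have hmeas : AEStronglyMeasurable
        (fun p : ℝ × ℝ => Real.cos p.2 * Real.exp (a*p.1*Real.cos p.2) * Real.exp (-p.1*c))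
        ((volume.restrict (Set.Ioi 0)).prod (volume.restrict (Set.Ioc 0 π))) :=
      (Continuous.aestronglyMeasurable (by fun_prop))
    apply Integrable.mono' (g := fun p : ℝ × ℝ => Real.exp (-((c-a) * p.1)) * 1) _ hmeas
    · rw [Measure.prod_restrict]
      filter_upwards [ae_restrict_mem (measurableSet_Ioi.prod measurableSet_Ioc)] with p hp
      obtain ⟨hp1, _⟩ := hp
      have ht : (0:ℝ) < p.1 := hp1
      have h1 : |Real.cos p.2| ≤ 1 := Real.abs_cos_le_one _
      have h2 : a * p.1 * Real.cos p.2 ≤ a * p.1 := by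
        nlinarith [mul_nonneg (mul_pos ha0 ht).le (sub_nonneg.2 (Real.cos_le_one p.2))]
      rw [mul_one]
      calc ‖Real.cos p.2 * Real.exp (a*p.1*Real.cos p.2) * Real.exp (-p.1*c)‖
          = |Real.cos p.2| * (Real.exp (a*p.1*Real.cos p.2) * Real.exp (-p.1*c)) := by
            rw [norm_mul, norm_mul, Real.norm_eq_abs, Real.norm_eq_abs, Real.norm_eq_abs,
              Real.abs_exp, Real.abs_exp, mul_assoc]
        _ ≤ 1 * (Real.exp (a*p.1*Real.cos p.2) * Real.exp (-p.1*c)) := by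
            apply mul_le_mul_of_nonneg_right h1 (by positivity)
        _ = Real.exp (a*p.1*Real.cos p.2 + -p.1*c) := by rw [one_mul, ← Real.exp_add]
        _ ≤ Real.exp (-((c-a) * p.1)) := by
            apply Real.exp_le_exp.2
            nlinarith
    · exact Integrable.mul_prod (f := fun t => Real.exp (-((c-a)*t))) (g := fun _ => (1:ℝ))
        (by
          have h := exp_neg_integrableOn_Ioi 0 (show (0:ℝ) < c - a by linarith)
          have he : (fun x : ℝ => Real.exp (-(c-a) * x)) = fun t : ℝ => Real.exp (-((c-a)*t)) := by
            funext x; rw [neg_mul]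
          rwa [he] at h)
        (integrableOn_const measure_Ioc_lt_top.ne)
  have hswap := integral_integral_swap
    (f := fun t θ => Real.cos θ * Real.exp (a*t*Real.cos θ) * Real.exp (-t*c)) hInt
  rw [hswap]
  have hev : ∀ θ : ℝ, (∫ t in Set.Ioi (0:ℝ),
      Real.cos θ * Real.exp (a*t*Real.cos θ) * Real.exp (-t*c))
      = Real.cos θ * (1/(c - a * Real.cos θ)) := by
    intro θ
    have hd : 0 < c - a * Real.cos θ := by
      nlinarith [Real.cos_le_one θ, Real.neg_one_le_cos θ]
    have heq : ∀ t : ℝ, Real.cos θ * Real.exp (a*t*Real.cos θ) * Real.exp (-t*c)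
        = Real.cos θ * Real.exp (-((c - a * Real.cos θ) * t)) := by
      intro t
      rw [mul_assoc, ← Real.exp_add]
      congr 1
      ring
    simp only [heq]
    rw [integral_const_mul, integral_exp_neg_mul hd]
  simp only [hev]
  have : ∀ θ : ℝ, Real.cos θ * (1/(c - a * Real.cos θ)) = Real.cos θ / (c - a * Real.cos θ) := by
    intro θ; rw [mul_one_div]
  simp only [this]
  rw [← intervalIntegral.integral_of_le hπ.le, integral_cos_div ha0 ha1 hc]
  field_simp

theorem weber_schafheitlin_I1K0 (u : ℝ) (hu0 : 0 < u) (hu1 : u < 1) :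
    ∫ t in Set.Ioi (0:ℝ), I1 (Real.sqrt u * t) * K0 t
      = - Real.log (1 - u) / (2 * Real.sqrt u) := by
  set a := Real.sqrt u with ha
  have ha0 : 0 < a := Real.sqrt_pos.2 hu0
  have ha1 : a < 1 := by
    rw [ha, show (1:ℝ) = Real.sqrt 1 by rw [Real.sqrt_one]]
    exact Real.sqrt_lt_sqrt hu0.le hu1
  have ha2 : a^2 = u := Real.sq_sqrt hu0.le
  have step : ∀ t : ℝ, I1 (a*t) * K0 t
      = ∫ v in Set.Ioi (0:ℝ), I1 (a*t) * Real.exp (-t * Real.cosh v) := by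
    intro t
    rw [K0, ← integral_const_mul]
  simp only [step]
  -- Fubini
  have hI1m : Measurable I1 := measurable_deriv I0
  have hmeas : AEStronglyMeasurable
      (fun p : ℝ × ℝ => I1 (a*p.1) * Real.exp (-p.1 * Real.cosh p.2))
      ((volume.restrict (Set.Ioi 0)).prod (volume.restrict (Set.Ioi 0))) := by
    apply Measurable.aestronglyMeasurable
    exact (hI1m.comp (measurable_fst.const_mul a)).mul
      (Real.continuous_exp.comp ((continuous_fst.neg).mul
        (Real.continuous_cosh.comp continuous_snd))).measurable
  have hgint : Integrable (fun p : ℝ × ℝ => Real.exp (-((1-a) * Real.cosh p.2 * p.1)))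
      ((volume.restrict (Set.Ioi 0)).prod (volume.restrict (Set.Ioi 0))) := by
    rw [integrable_prod_iff']
    constructor
    · filter_upwards with v
      have hb : 0 < (1-a) * Real.cosh v := by
        have := Real.one_le_cosh v
        nlinarith
      exact exp_aux hb
    · have hcalc : ∀ v : ℝ, (∫ t in Set.Ioi (0:ℝ),
          ‖Real.exp (-((1-a) * Real.cosh v * t))‖) = 1/((1-a) * Real.cosh v) := by
        intro v
        have hb : 0 < (1-a) * Real.cosh v := by
          have := Real.one_le_cosh v
          nlinarith
        simp only [Real.norm_eq_abs, Real.abs_exp]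
        exact integral_exp_neg_mul hb
      simp only [hcalc]
      apply Integrable.mono' (g := fun v : ℝ => (2/(1-a)) * Real.exp (-(1*v)))
      · exact (exp_aux one_pos).const_mul _
      · apply Measurable.aestronglyMeasurable
        apply Measurable.const_div
        exact (measurable_const.mul Real.continuous_cosh.measurable)
      · filter_upwards with v
        have hc1 := Real.one_le_cosh v
        have h1a : (0:ℝ) < 1 - a := by linarith
        have hev : Real.exp v ≤ 2 * Real.cosh v := by
          rw [Real.cosh_eq]; nlinarith [Real.exp_pos (-v)]
        have hb : 0 < (1-a) * Real.cosh v := by nlinarith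
        rw [Real.norm_eq_abs, abs_of_pos (by positivity)]
        rw [show -(1*v) = -v by ring, Real.exp_neg]
        have key : (1-a) * (Real.exp v/2) ≤ (1-a)*Real.cosh v := by nlinarith
        have h8 : 1/((1-a)*Real.cosh v) ≤ 1/((1-a)*(Real.exp v/2)) :=
          one_div_le_one_div_of_le (by positivity) key
        have h9 : 1/((1-a)*(Real.exp v/2)) = 2/(1-a) * (Real.exp v)⁻¹ := by
          field_simp
        rw [h9] at h8
        exact h8
    · exact (Continuous.aestronglyMeasurable (by fun_prop))
  have hInt2 : Integrable (fun p : ℝ × ℝ => I1 (a*p.1) * Real.exp (-p.1 * Real.cosh p.2))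
      ((volume.restrict (Set.Ioi 0)).prod (volume.restrict (Set.Ioi 0))) := by
    apply Integrable.mono' hgint hmeas
    rw [Measure.prod_restrict]
    filter_upwards [ae_restrict_mem (measurableSet_Ioi.prod measurableSet_Ioi)] with p hp
    obtain ⟨hp1, hp2⟩ := hp
    have ht : (0:ℝ) < p.1 := hp1
    have hv : (0:ℝ) < p.2 := hp2
    have hc1 := Real.one_le_cosh p.2
    have hI1 : |I1 (a * p.1)| ≤ Real.exp (a * p.1) := by
      have := abs_I1_le (a * p.1)
      rwa [abs_of_pos (show (0:ℝ) < a * p.1 by positivity)] at this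
    calc ‖I1 (a*p.1) * Real.exp (-p.1 * Real.cosh p.2)‖
        = |I1 (a*p.1)| * Real.exp (-p.1 * Real.cosh p.2) := by
          rw [norm_mul, Real.norm_eq_abs, Real.norm_eq_abs, Real.abs_exp]
      _ ≤ Real.exp (a * p.1) * Real.exp (-p.1 * Real.cosh p.2) := by
          apply mul_le_mul_of_nonneg_right hI1 (by positivity)
      _ = Real.exp (a * p.1 + -p.1 * Real.cosh p.2) := by rw [← Real.exp_add]
      _ ≤ Real.exp (-((1-a) * Real.cosh p.2 * p.1)) := by
          apply Real.exp_le_exp.2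
          nlinarith [mul_nonneg (mul_pos ha0 ht).le (sub_nonneg.2 hc1)]
  have hswap := integral_integral_swap
    (f := fun t v => I1 (a*t) * Real.exp (-t * Real.cosh v)) hInt2
  rw [hswap]
  have hstep2 : ∫ v in Set.Ioi (0:ℝ), (∫ t in Set.Ioi (0:ℝ), I1 (a*t) * Real.exp (-t * Real.cosh v))
      = ∫ v in Set.Ioi (0:ℝ), 1/a * (Real.cosh v / Real.sqrt (Real.cosh v^2 - a^2) - 1) := by
    apply setIntegral_congr_fun measurableSet_Ioi
    intro v hv
    exact claim1 ha0 ha1 (Real.one_lt_cosh.2 (ne_of_gt hv))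
  rw [hstep2, integral_const_mul, integral_cosh_div ha0 ha1]
  rw [ha2, Real.log_sqrt (by linarith)]
  ring
end

section
/- Define IKM(a,b;n) = ∫_0^∞ [I_0(t)]^a [K_0(t)]^b t^n dt. Then IKM(0,5;5) = (76/15)·IKM(0,5;3) − (16/45)·IKM(0,5;1) + 8/15. -/
open MeasureTheory Real

/-- The Bessel moment `IKM(a,b;n) = ∫₀^∞ I₀(t)^a K₀(t)^b tⁿ dt`. -/
noncomputable def IKM (a b n : ℕ) : ℝ :=
  ∫ t in Set.Ioi (0:ℝ), (I0 t)^a * (K0 t)^b * t^n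


open Set Filter Topology



noncomputable def Bk (m : ℕ) (t : ℝ) : ℝ :=
  ∫ u in Set.Ioi (0:ℝ), (Real.cosh u) ^ m * Real.exp (-t * Real.cosh u)

lemma self_le_cosh {u : ℝ} (hu : 0 ≤ u) : u ≤ Real.cosh u := by
  rw [Real.cosh_eq]
  nlinarith [Real.quadratic_le_exp_of_nonneg hu, Real.exp_pos (-u), sq_nonneg (u - 1)]

lemma abs_sinh_le_cosh (u : ℝ) : |Real.sinh u| ≤ Real.cosh u := by
  rw [abs_le]
  constructor
  · nlinarith [Real.sinh_eq u, Real.cosh_eq u, Real.exp_pos u, Real.exp_pos (-u)]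
  · nlinarith [Real.sinh_eq u, Real.cosh_eq u, Real.exp_pos u, Real.exp_pos (-u)]

lemma exp_half_le_cosh (u : ℝ) : Real.exp u / 2 ≤ Real.cosh u := by
  rw [Real.cosh_eq]
  nlinarith [Real.exp_pos (-u)]

lemma pow_le_fact_mul_exp {y : ℝ} (hy : 0 ≤ y) (m : ℕ) :
    y ^ m ≤ (m.factorial : ℝ) * Real.exp y := by
  have h := Real.sum_le_exp_of_nonneg hy (m + 1)
  have h2 : y ^ m / (m.factorial : ℝ) ≤ ∑ i ∈ Finset.range (m + 1), y ^ i / (i.factorial : ℝ) :=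
    Finset.single_le_sum (f := fun i => y ^ i / (i.factorial : ℝ))
      (fun i _ => by positivity) (Finset.self_mem_range_succ m)
  have hf : (0:ℝ) < (m.factorial : ℝ) := by exact_mod_cast m.factorial_pos
  rw [div_le_iff₀ hf] at h2
  calc y ^ m ≤ Real.exp y * (m.factorial : ℝ) := h2.trans (by gcongr)
    _ = (m.factorial : ℝ) * Real.exp y := by ring

lemma integrand_bound (m : ℕ) {t u : ℝ} (ht : 0 < t) (hu : 0 ≤ u) :
    Real.cosh u ^ m * Real.exp (-t * Real.cosh u) ≤
      (2/t) ^ m * (m.factorial : ℝ) * Real.exp (-(t/2) * u) := by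
  have hc := Real.cosh_pos u
  have h2 : ((t/2) * Real.cosh u) ^ m * Real.exp (-((t/2) * Real.cosh u)) ≤ (m.factorial : ℝ) := by
    have h := pow_le_fact_mul_exp (y := (t/2) * Real.cosh u) (by positivity) m
    rw [Real.exp_neg, mul_inv_le_iff₀ (Real.exp_pos _)]
    linarith
  have hA : Real.cosh u ^ m * Real.exp (-((t/2) * Real.cosh u)) ≤
      (2/t) ^ m * (m.factorial : ℝ) := by
    have h3 : Real.cosh u ^ m = (2/t) ^ m * ((t/2) * Real.cosh u) ^ m := by
      rw [← mul_pow]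
      congr 1
      field_simp
    rw [h3, mul_assoc]
    exact mul_le_mul_of_nonneg_left h2 (by positivity)
  have hB : Real.exp (-((t/2) * Real.cosh u)) ≤ Real.exp (-(t/2) * u) := by
    apply Real.exp_le_exp.2
    nlinarith [self_le_cosh hu]
  have hsplit : Real.exp (-t * Real.cosh u) =
      Real.exp (-((t/2) * Real.cosh u)) * Real.exp (-((t/2) * Real.cosh u)) := by
    rw [← Real.exp_add]
    congr 1
    ring
  rw [hsplit]
  calc Real.cosh u ^ m * (Real.exp (-((t/2) * Real.cosh u)) * Real.exp (-((t/2) * Real.cosh u)))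
      = (Real.cosh u ^ m * Real.exp (-((t/2) * Real.cosh u))) * Real.exp (-((t/2) * Real.cosh u)) := by
        ring
    _ ≤ ((2/t) ^ m * (m.factorial : ℝ)) * Real.exp (-(t/2) * u) :=
        mul_le_mul hA hB (by positivity) (by positivity)

lemma B_cont (m : ℕ) (t : ℝ) :
    Continuous (fun u => Real.cosh u ^ m * Real.exp (-t * Real.cosh u)) := by
  fun_prop

lemma B_integrableOn (m : ℕ) {t : ℝ} (ht : 0 < t) :
    IntegrableOn (fun u => Real.cosh u ^ m * Real.exp (-t * Real.cosh u)) (Set.Ioi 0) := by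
  apply Integrable.mono' (g := fun u => (2/t) ^ m * (m.factorial : ℝ) * Real.exp (-(t/2) * u))
  · exact (exp_neg_integrableOn_Ioi 0 (by positivity : (0:ℝ) < t/2)).const_mul _
  · exact ((B_cont m t).aestronglyMeasurable).restrict
  · filter_upwards [ae_restrict_mem measurableSet_Ioi] with u hu
    rw [Real.norm_eq_abs, abs_of_nonneg (by positivity)]
    exact integrand_bound m ht (le_of_lt hu)

lemma B_nonneg (m : ℕ) (t : ℝ) : 0 ≤ Bk m t := by
  apply setIntegral_nonneg measurableSet_Ioi
  intro u _
  positivity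

lemma hasDerivAt_B (m : ℕ) {t : ℝ} (ht : 0 < t) :
    HasDerivAt (Bk m) (-Bk (m + 1) t) t := by
  have key := hasDerivAt_integral_of_dominated_loc_of_deriv_le
      (μ := volume.restrict (Set.Ioi (0:ℝ)))
      (F := fun x u => Real.cosh u ^ m * Real.exp (-x * Real.cosh u))
      (F' := fun x u => -(Real.cosh u ^ (m+1) * Real.exp (-x * Real.cosh u)))
      (x₀ := t)
      (bound := fun u => (2/(t/2)) ^ (m+1) * ((m+1).factorial : ℝ) * Real.exp (-((t/2)/2) * u))
      (Metric.ball_mem_nhds t (half_pos ht))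
      (Eventually.of_forall fun x => ((B_cont m x).aestronglyMeasurable).restrict)
      (B_integrableOn m ht)
      (((B_cont (m+1) t).neg.aestronglyMeasurable).restrict)
      ?_ ((exp_neg_integrableOn_Ioi 0 (by positivity : (0:ℝ) < (t/2)/2)).const_mul _) ?_
  · simp only [integral_neg] at key
    exact key.2
  · filter_upwards [ae_restrict_mem measurableSet_Ioi] with u hu
    intro x hx
    have hx' : |x - t| < t/2 := by simpa [Real.dist_eq] using Metric.mem_ball.1 hx
    have hx2 : t/2 < x := by
      have := abs_lt.1 hx'
      linarith [this.1]
    rw [norm_neg, Real.norm_eq_abs, abs_of_nonneg (by positivity)]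
    calc Real.cosh u ^ (m+1) * Real.exp (-x * Real.cosh u)
        ≤ Real.cosh u ^ (m+1) * Real.exp (-(t/2) * Real.cosh u) := by
          apply mul_le_mul_of_nonneg_left _ (by positivity)
          apply Real.exp_le_exp.2
          nlinarith [Real.cosh_pos u]
      _ ≤ (2/(t/2)) ^ (m+1) * ((m+1).factorial : ℝ) * Real.exp (-((t/2)/2) * u) :=
          integrand_bound (m+1) (by positivity) (le_of_lt hu)
  · filter_upwards [ae_restrict_mem measurableSet_Ioi] with u _
    intro x _
    have h1 : HasDerivAt (fun x : ℝ => -x * Real.cosh u) (-Real.cosh u) x := by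
      have := (hasDerivAt_id' x).neg.mul_const (Real.cosh u)
      rwa [neg_one_mul] at this
    have h2 := (h1.exp).const_mul (Real.cosh u ^ m)
    refine h2.congr_deriv ?_
    rw [pow_succ]
    ring

lemma Bk_def (m : ℕ) (t : ℝ) :
    Bk m t = ∫ u in Set.Ioi (0:ℝ), (Real.cosh u) ^ m * Real.exp (-t * Real.cosh u) := rfl

-- placeholders from stage1

-- IBP: t * B2 = t * B0 + B1
lemma B2_recurrence {t : ℝ} (ht : 0 < t) : t * Bk 2 t = t * Bk 0 t + Bk 1 t := by
  have hder : ∀ u ∈ Set.Ici (0:ℝ),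
      HasDerivAt (fun u => -(Real.sinh u * Real.exp (-t * Real.cosh u)))
        (t * (Real.sinh u)^2 * Real.exp (-t * Real.cosh u)
          - Real.cosh u * Real.exp (-t * Real.cosh u)) u := by
    intro u _
    have h1 : HasDerivAt (fun u : ℝ => -t * Real.cosh u) (-t * Real.sinh u) u :=
      (Real.hasDerivAt_cosh u).const_mul (-t)
    have h2 := ((Real.hasDerivAt_sinh u).mul h1.exp).neg
    refine h2.congr_deriv ?_
    ring
  have hint : IntegrableOn (fun u => t * (Real.sinh u)^2 * Real.exp (-t * Real.cosh u)
      - Real.cosh u * Real.exp (-t * Real.cosh u)) (Set.Ioi 0) := by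
    have h1 : IntegrableOn (fun u => t * (Real.cosh u ^ 2 * Real.exp (-t * Real.cosh u))
        - t * (Real.cosh u ^ 0 * Real.exp (-t * Real.cosh u))) (Set.Ioi 0) :=
      ((B_integrableOn 2 ht).const_mul t).sub ((B_integrableOn 0 ht).const_mul t)
    have h2 : IntegrableOn (fun u => (t * (Real.cosh u ^ 2 * Real.exp (-t * Real.cosh u))
        - t * (Real.cosh u ^ 0 * Real.exp (-t * Real.cosh u)))
        - Real.cosh u ^ 1 * Real.exp (-t * Real.cosh u)) (Set.Ioi 0) :=
      h1.sub (B_integrableOn 1 ht)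
    apply h2.congr_fun _ measurableSet_Ioi
    intro u _
    have hs : Real.sinh u ^ 2 = Real.cosh u ^ 2 - 1 := by
      have := Real.cosh_sq_sub_sinh_sq u
      linarith
    simp only [hs, pow_one, pow_zero]
    ring
  have hlim : Tendsto (fun u => -(Real.sinh u * Real.exp (-t * Real.cosh u))) atTop (𝓝 0) := by
    have hb : ∀ u, ‖-(Real.sinh u * Real.exp (-t * Real.cosh u))‖ ≤
        Real.cosh u * Real.exp (-t * Real.cosh u) := by
      intro u
      rw [norm_neg, Real.norm_eq_abs, abs_mul, Real.abs_exp]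
      exact mul_le_mul_of_nonneg_right (abs_sinh_le_cosh u) (le_of_lt (Real.exp_pos _))
    apply squeeze_zero_norm hb
    · have h1 : Tendsto (fun y : ℝ => y * Real.exp (-t * y)) atTop (𝓝 0) := by
        have := tendsto_rpow_mul_exp_neg_mul_atTop_nhds_zero 1 t ht
        apply this.congr'
        filter_upwards [eventually_gt_atTop (0:ℝ)] with y hy
        rw [Real.rpow_one]
      have h2 : Tendsto Real.cosh atTop atTop := by
        apply tendsto_atTop_mono' atTop _ tendsto_id
        filter_upwards [eventually_ge_atTop (0:ℝ)] with u hu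
        exact self_le_cosh hu
      exact h1.comp h2
  have key := integral_Ioi_of_hasDerivAt_of_tendsto'
      (f := fun u => -(Real.sinh u * Real.exp (-t * Real.cosh u)))
      (a := 0) hder hint hlim
  simp only [Real.sinh_zero, zero_mul, neg_zero, sub_zero] at key
  -- key : ∫ u in Ioi 0, (t sinh² e - cosh e) = 0
  have hsplit : ∫ u in Set.Ioi (0:ℝ), (t * (Real.sinh u)^2 * Real.exp (-t * Real.cosh u)
      - Real.cosh u * Real.exp (-t * Real.cosh u))
      = (t * Bk 2 t - t * Bk 0 t) - Bk 1 t := by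
    have e1 : ∀ u ∈ Set.Ioi (0:ℝ), t * (Real.sinh u)^2 * Real.exp (-t * Real.cosh u)
        - Real.cosh u * Real.exp (-t * Real.cosh u)
        = (t * (Real.cosh u ^ 2 * Real.exp (-t * Real.cosh u))
          - t * (Real.cosh u ^ 0 * Real.exp (-t * Real.cosh u)))
          - Real.cosh u ^ 1 * Real.exp (-t * Real.cosh u) := by
      intro u _
      have hs : Real.sinh u ^ 2 = Real.cosh u ^ 2 - 1 := by
        have := Real.cosh_sq_sub_sinh_sq u
        linarith
      simp only [hs, pow_one, pow_zero]
      ring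
    rw [setIntegral_congr_fun measurableSet_Ioi e1]
    have i2 : IntegrableOn (fun u => t * (Real.cosh u ^ 2 * Real.exp (-t * Real.cosh u)))
        (Set.Ioi 0) := (B_integrableOn 2 ht).const_mul t
    have i0 : IntegrableOn (fun u => t * (Real.cosh u ^ 0 * Real.exp (-t * Real.cosh u)))
        (Set.Ioi 0) := (B_integrableOn 0 ht).const_mul t
    have i20 : IntegrableOn (fun u => t * (Real.cosh u ^ 2 * Real.exp (-t * Real.cosh u))
        - t * (Real.cosh u ^ 0 * Real.exp (-t * Real.cosh u))) (Set.Ioi 0) := i2.sub i0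
    rw [integral_sub i20 (B_integrableOn 1 ht), integral_sub i2 i0,
      integral_const_mul, integral_const_mul]
    rw [Bk_def, Bk_def, Bk_def]
  rw [hsplit] at key
  linarith

-- decay at infinity
lemma B_decay (m : ℕ) {t : ℝ} (ht : 1 ≤ t) : Bk m t ≤ Real.exp (1 - t) * Bk m 1 := by
  rw [Bk_def, Bk_def, ← integral_const_mul]
  apply setIntegral_mono_on (B_integrableOn m (by linarith))
    (((B_integrableOn m one_pos)).const_mul _) measurableSet_Ioi
  intro u _
  have h1 : Real.exp (-t * Real.cosh u) ≤ Real.exp (1 - t) * Real.exp (-1 * Real.cosh u) := by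
    rw [← Real.exp_add]
    apply Real.exp_le_exp.2
    nlinarith [Real.one_le_cosh u]
  calc Real.cosh u ^ m * Real.exp (-t * Real.cosh u)
      ≤ Real.cosh u ^ m * (Real.exp (1 - t) * Real.exp (-1 * Real.cosh u)) :=
        mul_le_mul_of_nonneg_left h1 (by positivity)
    _ = Real.exp (1 - t) * (Real.cosh u ^ m * Real.exp (-1 * Real.cosh u)) := by ring


-- small-t logarithmic bound for B0
lemma B0_small {t : ℝ} (ht : 0 < t) (ht2 : t ≤ 2) : Bk 0 t ≤ Real.log (2/t) + 1 := by
  set A := Real.log (2/t) with hA_def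
  have h2t : (1:ℝ) ≤ 2/t := by
    rw [le_div_iff₀ ht]; linarith
  have hA : 0 ≤ A := Real.log_nonneg h2t
  have hexpA : Real.exp A = 2/t := Real.exp_log (by positivity)
  have hsplit : Set.Ioi (0:ℝ) = Set.Ioc 0 A ∪ Set.Ioi A := (Set.Ioc_union_Ioi_eq_Ioi hA).symm
  rw [Bk_def, hsplit]
  rw [setIntegral_union (Set.Ioc_disjoint_Ioi le_rfl) measurableSet_Ioi
      ((B_integrableOn 0 ht).mono_set (by rw [hsplit]; exact Set.subset_union_left))
      ((B_integrableOn 0 ht).mono_set (by rw [hsplit]; exact Set.subset_union_right))]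
  have hpart1 : (∫ u in Set.Ioc (0:ℝ) A, Real.cosh u ^ 0 * Real.exp (-t * Real.cosh u)) ≤ A := by
    have := norm_setIntegral_le_of_norm_le_const (μ := volume) (s := Set.Ioc (0:ℝ) A)
      (C := 1) (by simp [Real.volume_Ioc])
      (f := fun u => Real.cosh u ^ 0 * Real.exp (-t * Real.cosh u)) ?_
    · calc (∫ u in Set.Ioc (0:ℝ) A, Real.cosh u ^ 0 * Real.exp (-t * Real.cosh u))
          ≤ ‖∫ u in Set.Ioc (0:ℝ) A, Real.cosh u ^ 0 * Real.exp (-t * Real.cosh u)‖ :=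
            le_abs_self _
        _ ≤ 1 * (volume (Set.Ioc (0:ℝ) A)).toReal := this
        _ = A := by
            rw [Real.volume_Ioc, one_mul, ENNReal.toReal_ofReal (by linarith)]
            ring
    · intro u _
      simp only [pow_zero, one_mul, Real.norm_eq_abs, Real.abs_exp]
      rw [Real.exp_le_one_iff]
      nlinarith [Real.cosh_pos u]
  have hpart2 : (∫ u in Set.Ioi A, Real.cosh u ^ 0 * Real.exp (-t * Real.cosh u)) ≤ 1 := by
    have hptwise : ∀ u ∈ Set.Ioi A, Real.cosh u ^ 0 * Real.exp (-t * Real.cosh u)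
        ≤ Real.exp (A - 1) * Real.exp (-u) := by
      intro u hu
      have hu' : A < u := hu
      have h1 : 1 + (u - A) ≤ Real.exp (u - A) := by
        have := Real.add_one_le_exp (u - A)
        linarith
      have h2 : Real.exp (u - A) = t * Real.exp u / 2 := by
        rw [Real.exp_sub, hexpA]
        field_simp
      have h3 : t * Real.cosh u ≥ 1 + (u - A) := by
        have h4 := exp_half_le_cosh u
        have h5 : t * (Real.exp u / 2) ≤ t * Real.cosh u :=
          mul_le_mul_of_nonneg_left h4 (le_of_lt ht)
        nlinarith
      rw [pow_zero, one_mul, ← Real.exp_add]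
      apply Real.exp_le_exp.2
      linarith
    have hrhs_int : IntegrableOn (fun u => Real.exp (A - 1) * Real.exp (-u)) (Set.Ioi A) := by
      have := (exp_neg_integrableOn_Ioi A (by norm_num : (0:ℝ) < 1)).const_mul (Real.exp (A - 1))
      simp only [neg_mul, one_mul] at this
      exact this
    calc (∫ u in Set.Ioi A, Real.cosh u ^ 0 * Real.exp (-t * Real.cosh u))
        ≤ ∫ u in Set.Ioi A, Real.exp (A - 1) * Real.exp (-u) := by
          apply setIntegral_mono_on
            ((B_integrableOn 0 ht).mono_set (by rw [hsplit]; exact Set.subset_union_right))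
            hrhs_int measurableSet_Ioi hptwise
      _ = Real.exp (A - 1) * Real.exp (-A) := by
          rw [integral_const_mul, integral_exp_neg_Ioi]
      _ = Real.exp (-1) := by rw [← Real.exp_add]; ring_nf
      _ ≤ 1 := by rw [Real.exp_le_one_iff]; norm_num
  linarith

-- change of variables: t * B1 t as an integral
lemma tB1_eq {t : ℝ} (ht : 0 < t) :
    t * Bk 1 t = ∫ v in Set.Ioi (0:ℝ), Real.exp (-Real.sqrt (t^2 + v^2)) := by
  have himg : (fun u => t * Real.sinh u) '' (Set.Ioi 0) = Set.Ioi 0 := by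
    ext v
    constructor
    · rintro ⟨u, hu, rfl⟩
      exact mul_pos ht (by rwa [Real.sinh_pos_iff])
    · intro hv
      refine ⟨Real.arsinh (v/t), ?_, ?_⟩
      · rw [Set.mem_Ioi, Real.arsinh_pos_iff]
        exact div_pos hv ht
      · show t * Real.sinh (Real.arsinh (v/t)) = v
        rw [Real.sinh_arsinh]
        field_simp
  have hderiv : ∀ u ∈ Set.Ioi (0:ℝ), HasDerivWithinAt (fun u => t * Real.sinh u)
      (t * Real.cosh u) (Set.Ioi 0) u := fun u _ =>
    ((Real.hasDerivAt_sinh u).const_mul t).hasDerivWithinAt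
  have hinj : Set.InjOn (fun u => t * Real.sinh u) (Set.Ioi 0) := by
    intro a _ b _ hab
    simp only at hab
    exact Real.sinh_injective (mul_left_cancel₀ (ne_of_gt ht) hab)
  have key := integral_image_eq_integral_abs_deriv_smul measurableSet_Ioi hderiv hinj
      (fun v => Real.exp (-Real.sqrt (t^2 + v^2)))
  rw [himg] at key
  rw [key, Bk_def, ← integral_const_mul]
  apply setIntegral_congr_fun measurableSet_Ioi
  intro u hu
  have hcu : (0:ℝ) < Real.cosh u := Real.cosh_pos u
  have hsq : t^2 + (t * Real.sinh u)^2 = (t * Real.cosh u)^2 := by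
    have := Real.cosh_sq_sub_sinh_sq u
    nlinarith
  simp only [smul_eq_mul]
  rw [hsq, Real.sqrt_sq (by positivity), abs_of_pos (by positivity)]
  ring


lemma tendsto_tB1 : Tendsto (fun t => t * Bk 1 t) (𝓝[>] (0:ℝ)) (𝓝 1) := by
  have hmain : Tendsto (fun t => ∫ v in Set.Ioi (0:ℝ), Real.exp (-Real.sqrt (t^2 + v^2)))
      (𝓝[>] (0:ℝ)) (𝓝 (∫ v in Set.Ioi (0:ℝ), Real.exp (-v))) := by
    apply tendsto_integral_filter_of_dominated_convergence (bound := fun v => Real.exp (-v))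
    · apply Eventually.of_forall
      intro t
      apply Continuous.aestronglyMeasurable ?_ |>.restrict
      fun_prop
    · apply Eventually.of_forall
      intro t
      filter_upwards [ae_restrict_mem measurableSet_Ioi] with v hv
      rw [Real.norm_eq_abs, Real.abs_exp, Real.exp_le_exp, neg_le_neg_iff]
      calc v = Real.sqrt (v^2) := (Real.sqrt_sq (le_of_lt hv)).symm
        _ ≤ Real.sqrt (t^2 + v^2) := Real.sqrt_le_sqrt (by nlinarith)
    · exact (exp_neg_integrableOn_Ioi 0 one_pos).congr_fun (fun v _ => by norm_num)
        measurableSet_Ioi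
    · filter_upwards [ae_restrict_mem measurableSet_Ioi] with v hv
      have hcont : Continuous (fun t : ℝ => Real.exp (-Real.sqrt (t^2 + v^2))) := by fun_prop
      have := hcont.tendsto 0
      simp only [ne_eq, OfNat.ofNat_ne_zero, not_false_eq_true, zero_pow, zero_add] at this
      rw [Real.sqrt_sq (le_of_lt hv)] at this
      exact this.mono_left nhdsWithin_le_nhds
  have heq : ∀ᶠ t in 𝓝[>] (0:ℝ), (∫ v in Set.Ioi (0:ℝ), Real.exp (-Real.sqrt (t^2 + v^2)))
      = t * Bk 1 t := by
    filter_upwards [self_mem_nhdsWithin] with t ht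
    exact (tB1_eq ht).symm
  have h1 : (∫ v in Set.Ioi (0:ℝ), Real.exp (-v)) = 1 := integral_exp_neg_Ioi_zero
  rw [h1] at hmain
  exact hmain.congr' heq

-- eventual bound t² (Bk 0 t)^j ≤ 240 e t for small t, hence limits
lemma B0_pow_bound {t : ℝ} (ht : 0 < t) (ht1 : t ≤ 1) {j : ℕ} (hj : j ≤ 5) :
    t^2 * (Bk 0 t)^j ≤ 240 * Real.exp 1 * t := by
  set x := Real.log (2/t) + 1 with hx_def
  have h2t : (1:ℝ) ≤ 2/t := by rw [le_div_iff₀ ht]; linarith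
  have hlog : 0 ≤ Real.log (2/t) := Real.log_nonneg h2t
  have hx1 : 1 ≤ x := by simp only [hx_def]; linarith
  have hB : Bk 0 t ≤ x := by
    have := B0_small ht (by linarith)
    simp only [hx_def]; linarith
  have hexp : Real.exp x = Real.exp 1 * (2/t) := by
    rw [hx_def, Real.exp_add, Real.exp_log (by positivity)]
    ring
  have hxj : (Bk 0 t)^j ≤ x^5 := by
    calc (Bk 0 t)^j ≤ x^j := pow_le_pow_left₀ (B_nonneg 0 t) hB j
      _ ≤ x^5 := pow_le_pow_right₀ hx1 hj
  have hx5 : x^5 ≤ 120 * Real.exp x := by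
    have h := pow_le_fact_mul_exp (le_trans zero_le_one hx1) 5
    have hf : ((Nat.factorial 5 : ℕ) : ℝ) = 120 := by norm_num [Nat.factorial]
    rw [hf] at h
    linarith
  calc t^2 * (Bk 0 t)^j ≤ t^2 * (120 * Real.exp x) := by
        apply mul_le_mul_of_nonneg_left (hxj.trans hx5) (by positivity)
    _ = 240 * Real.exp 1 * t := by
        rw [hexp]; field_simp; ring
  
lemma tendsto_t2B0 (j : ℕ) (hj : j ≤ 5) :
    Tendsto (fun t => t^2 * (Bk 0 t)^j) (𝓝[>] (0:ℝ)) (𝓝 0) := by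
  apply squeeze_zero' (f := fun t => t^2 * (Bk 0 t)^j) (g := fun t => 240 * Real.exp 1 * t)
  · filter_upwards [self_mem_nhdsWithin] with t ht
    have := B_nonneg 0 t
    positivity
  · filter_upwards [Ioc_mem_nhdsGT_of_mem (Set.mem_Ico.2 ⟨le_rfl, one_pos⟩)] with t ht
    exact B0_pow_bound ht.1 ht.2 hj
  · have : Tendsto (fun t : ℝ => 240 * Real.exp 1 * t) (𝓝 0) (𝓝 0) := by
      have h : Continuous (fun t : ℝ => 240 * Real.exp 1 * t) := continuous_const.mul continuous_id
      simpa using h.tendsto 0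
    exact this.mono_left nhdsWithin_le_nhds

-- moment integrability
lemma moment_integrable (n : ℕ) (hn1 : 1 ≤ n) (hn : n ≤ 5) :
    IntegrableOn (fun t => (Bk 0 t)^5 * t^n) (Set.Ioi 0) := by
  have hcontB : ContinuousOn (Bk 0) (Set.Ioi 0) := fun t ht =>
    ((hasDerivAt_B 0 ht).continuousAt).continuousWithinAt
  have hcont : ContinuousOn (fun t => (Bk 0 t)^5 * t^n) (Set.Ioi 0) :=
    ((hcontB.pow 5).mul (continuousOn_pow n))
  have hsplit : Set.Ioi (0:ℝ) = Set.Ioc 0 1 ∪ Set.Ioi 1 :=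
    (Set.Ioc_union_Ioi_eq_Ioi zero_le_one).symm
  rw [hsplit]
  apply IntegrableOn.union
  · -- bounded by constant on (0,1]
    apply Integrable.mono' (g := fun _ => 240 * Real.exp 1)
    · exact integrableOn_const (by simp [Real.volume_Ioc])
    · exact (hcont.mono (by rw [hsplit]; exact Set.subset_union_left)).aestronglyMeasurable
        measurableSet_Ioc
    · filter_upwards [ae_restrict_mem measurableSet_Ioc] with t htt
      obtain ⟨ht, ht1⟩ := htt
      have hB := B_nonneg 0 t
      rw [Real.norm_eq_abs, abs_of_nonneg (by positivity)]
      have h1 : (Bk 0 t)^5 * t^n ≤ (Bk 0 t)^5 * t := by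
        apply mul_le_mul_of_nonneg_left _ (by positivity)
        calc t^n ≤ t^1 := pow_le_pow_of_le_one (le_of_lt ht) ht1 hn1
          _ = t := pow_one t
      have h2 : (Bk 0 t)^5 * t ≤ 240 * Real.exp 1 := by
        have h3 : t * ((Bk 0 t)^5 * t) = t^2 * (Bk 0 t)^5 := by ring
        have h4 := B0_pow_bound ht ht1 (le_refl 5)
        -- t² B⁵ ≤ 240 e t  ⇒  B⁵ t ≤ 240 e
        nlinarith [pow_nonneg hB 5]
      linarith
  · -- exponential decay on (1,∞)
    apply Integrable.mono' (g := fun t => ((Bk 0 1)^5 * Real.exp 5) * Real.exp (-t))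
    · exact ((exp_neg_integrableOn_Ioi 1 one_pos).congr_fun (fun v _ => by norm_num)
        measurableSet_Ioi).const_mul _
    · exact (hcont.mono (by rw [hsplit]; exact Set.subset_union_right)).aestronglyMeasurable
        measurableSet_Ioi
    · filter_upwards [ae_restrict_mem measurableSet_Ioi] with t ht
      have ht1 : (1:ℝ) ≤ t := le_of_lt ht
      have hB := B_nonneg 0 t
      have hB1 := B_nonneg 0 1
      rw [Real.norm_eq_abs, abs_of_nonneg (by positivity)]
      have h1 : (Bk 0 t)^5 ≤ (Real.exp (1 - t))^5 * (Bk 0 1)^5 := by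
        calc (Bk 0 t)^5 ≤ (Real.exp (1 - t) * Bk 0 1)^5 :=
              pow_le_pow_left₀ hB (B_decay 0 ht1) 5
          _ = (Real.exp (1 - t))^5 * (Bk 0 1)^5 := by ring
      have h2 : t^n ≤ t^5 := pow_le_pow_right₀ ht1 hn
      have h3 : t^5 ≤ Real.exp (4*t) := by
        have h4 := pow_le_fact_mul_exp (y := 4*t) (by linarith) 5
        have h5 : (4*t)^5 = 1024 * t^5 := by ring
        rw [h5] at h4
        have hf : ((Nat.factorial 5 : ℕ) : ℝ) = 120 := by norm_num [Nat.factorial]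
        rw [hf] at h4
        nlinarith [Real.exp_pos (4*t)]
      have h6 : (Real.exp (1 - t))^5 = Real.exp 5 * Real.exp (-5*t) := by
        rw [← Real.exp_nat_mul, ← Real.exp_add]
        congr 1
        ring
      calc (Bk 0 t)^5 * t^n ≤ ((Real.exp (1 - t))^5 * (Bk 0 1)^5) * Real.exp (4*t) := by
            apply mul_le_mul h1 (h2.trans h3) (by positivity) (by positivity)
        _ = ((Bk 0 1)^5 * Real.exp 5) * (Real.exp (-5*t) * Real.exp (4*t)) := by
            rw [h6]; ring
        _ = ((Bk 0 1)^5 * Real.exp 5) * Real.exp (-t) := by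
            rw [← Real.exp_add]; congr 2; ring






noncomputable def PP (t : ℝ) : ℝ :=
  8/45 * (t^2 * (Bk 0 t)^5) + 4/9 * (t^3 * ((Bk 0 t)^4 * Bk 1 t))
  + 8/9 * (t^4 * ((Bk 0 t)^3 * (Bk 1 t)^2)) - 52/45 * (t^4 * (Bk 0 t)^5)
  - 8/15 * (t^5 * (Bk 1 t)^5) + 4/3 * (t^5 * ((Bk 0 t)^2 * (Bk 1 t)^3))
  - t^5 * ((Bk 0 t)^4 * Bk 1 t)

lemma hasDerivAt_PP {t : ℝ} (ht : 0 < t) :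
    HasDerivAt PP ((t^5 - 76/15*t^3 + 16/45*t) * (Bk 0 t)^5) t := by
  have ht' : t ≠ 0 := ne_of_gt ht
  have hc : HasDerivAt (Bk 0) (-Bk 1 t) t := hasDerivAt_B 0 ht
  have hs : HasDerivAt (Bk 1) (-(Bk 0 t) - Bk 1 t / t) t := by
    have h := hasDerivAt_B 1 ht
    have h2 : -Bk 2 t = -(Bk 0 t) - Bk 1 t / t := by
      have h3 := B2_recurrence ht
      field_simp
      linarith
    rwa [h2] at h
  have m45 := (hc.pow 4).mul hs
  have m32 := (hc.pow 3).mul (hs.pow 2)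
  have m23 := (hc.pow 2).mul (hs.pow 3)
  have t1 := ((hasDerivAt_pow 2 t).mul (hc.pow 5)).const_mul (8/45 : ℝ)
  have t2 := ((hasDerivAt_pow 3 t).mul m45).const_mul (4/9 : ℝ)
  have t3 := ((hasDerivAt_pow 4 t).mul m32).const_mul (8/9 : ℝ)
  have t4 := ((hasDerivAt_pow 4 t).mul (hc.pow 5)).const_mul (52/45 : ℝ)
  have t5 := ((hasDerivAt_pow 5 t).mul (hs.pow 5)).const_mul (8/15 : ℝ)
  have t6 := ((hasDerivAt_pow 5 t).mul m23).const_mul (4/3 : ℝ)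
  have t7 := (hasDerivAt_pow 5 t).mul m45
  have total := (((((t1.add t2).add t3).sub t4).sub t5).add t6).sub t7
  have hPP : HasDerivAt PP _ t := total
  refine hPP.congr_deriv ?_
  simp only [Pi.pow_apply, Pi.mul_apply]
  push_cast
  field_simp
  ring

lemma tendsto_PP_atTop : Tendsto PP atTop (𝓝 0) := by
  set K := max (Bk 0 1) (Bk 1 1) with hK_def
  have hK0 : 0 ≤ K := le_trans (B_nonneg 0 1) (le_max_left _ _)
  set C := (83/15 : ℝ) * (K^5 * Real.exp 5) with hC_def
  have hdecay : Tendsto (fun t : ℝ => C * (t^5 * Real.exp (-5*t))) atTop (𝓝 0) := by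
    have h := tendsto_rpow_mul_exp_neg_mul_atTop_nhds_zero 5 5 (by norm_num)
    have h2 : Tendsto (fun t : ℝ => t^(5:ℕ) * Real.exp (-5*t)) atTop (𝓝 0) := by
      apply h.congr'
      filter_upwards [eventually_gt_atTop (0:ℝ)] with x hx
      rw [← Real.rpow_natCast x 5]
      norm_num
    have h3 := h2.const_mul C
    simpa using h3
  apply squeeze_zero_norm' _ hdecay
  filter_upwards [eventually_ge_atTop (1:ℝ)] with t ht1
  have htpos : (0:ℝ) < t := lt_of_lt_of_le one_pos ht1
  set c := Bk 0 t with hc_def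
  set s := Bk 1 t with hs_def
  set E := Real.exp (1 - t) with hE_def
  have hE0 : 0 < E := Real.exp_pos _
  have hc0 : 0 ≤ c := B_nonneg 0 t
  have hs0 : 0 ≤ s := B_nonneg 1 t
  have hcK : c ≤ K * E := by
    calc c ≤ E * Bk 0 1 := B_decay 0 ht1
      _ ≤ E * K := by apply mul_le_mul_of_nonneg_left (le_max_left _ _) (le_of_lt hE0)
      _ = K * E := by ring
  have hsK : s ≤ K * E := by
    calc s ≤ E * Bk 1 1 := B_decay 1 ht1
      _ ≤ E * K := by apply mul_le_mul_of_nonneg_left (le_max_right _ _) (le_of_lt hE0)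
      _ = K * E := by ring
  have hKE0 : 0 ≤ K * E := by positivity
  set M := t^5 * (K*E)^5 with hM_def
  have hM0 : 0 ≤ M := by positivity
  -- monomial bounds
  have hprod : ∀ (j k : ℕ), j + k = 5 → c^j * s^k ≤ (K*E)^5 := by
    intro j k hjk
    calc c^j * s^k ≤ (K*E)^j * (K*E)^k :=
          mul_le_mul (pow_le_pow_left₀ hc0 hcK j) (pow_le_pow_left₀ hs0 hsK k)
            (by positivity) (by positivity)
      _ = (K*E)^5 := by rw [← pow_add, hjk]
  have htle : ∀ (m : ℕ), m ≤ 5 → t^m ≤ t^5 := fun m hm => pow_le_pow_right₀ ht1 hm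
  have hmono : ∀ (m : ℕ), m ≤ 5 → ∀ (X : ℝ), 0 ≤ X → X ≤ (K*E)^5 → t^m * X ≤ M := by
    intro m hm X hX0 hXle
    calc t^m * X ≤ t^5 * (K*E)^5 :=
          mul_le_mul (htle m hm) hXle hX0 (by positivity)
      _ = M := rfl
  have h1 : t^2 * c^5 ≤ M := hmono 2 (by norm_num) _ (by positivity) (by simpa using hprod 5 0 rfl)
  have h2 : t^3 * (c^4 * s) ≤ M := hmono 3 (by norm_num) _ (by positivity) (by simpa using hprod 4 1 rfl)
  have h3 : t^4 * (c^3 * s^2) ≤ M := hmono 4 (by norm_num) _ (by positivity) (hprod 3 2 rfl)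
  have h4 : t^4 * c^5 ≤ M := hmono 4 (by norm_num) _ (by positivity) (by simpa using hprod 5 0 rfl)
  have h5 : t^5 * s^5 ≤ M := hmono 5 (by norm_num) _ (by positivity) (by simpa using hprod 0 5 rfl)
  have h6 : t^5 * (c^2 * s^3) ≤ M := hmono 5 (by norm_num) _ (by positivity) (hprod 2 3 rfl)
  have h7 : t^5 * (c^4 * s) ≤ M := hmono 5 (by norm_num) _ (by positivity) (by simpa using hprod 4 1 rfl)
  have hn1 : 0 ≤ t^2 * c^5 := by positivity
  have hn2 : 0 ≤ t^3 * (c^4 * s) := by positivity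
  have hn3 : 0 ≤ t^4 * (c^3 * s^2) := by positivity
  have hn4 : 0 ≤ t^4 * c^5 := by positivity
  have hn5 : 0 ≤ t^5 * s^5 := by positivity
  have hn6 : 0 ≤ t^5 * (c^2 * s^3) := by positivity
  have hn7 : 0 ≤ t^5 * (c^4 * s) := by positivity
  have habs : |PP t| ≤ (83/15) * M := by
    rw [abs_le]
    constructor
    · simp only [PP, ← hc_def, ← hs_def]
      linarith
    · simp only [PP, ← hc_def, ← hs_def]
      linarith
  have hMeq : (83/15) * M = C * (t^5 * Real.exp (-5*t)) := by
    have hE5 : (K*E)^5 = K^5 * (Real.exp 5 * Real.exp (-5*t)) := by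
      rw [mul_pow, hE_def, ← Real.exp_nat_mul, ← Real.exp_add]
      congr 1
      push_cast
      ring
    rw [hM_def, hE5, hC_def]
    ring
  rw [Real.norm_eq_abs]
  calc |PP t| ≤ (83/15) * M := habs
    _ = C * (t^5 * Real.exp (-5*t)) := hMeq

lemma tendsto_PP_zero : Tendsto PP (𝓝[>] (0:ℝ)) (𝓝 (-8/15)) := by
  have hts := tendsto_tB1
  have ht2 : Tendsto (fun t : ℝ => t^2) (𝓝[>] (0:ℝ)) (𝓝 0) := by
    have h := (continuous_pow 2).tendsto (0:ℝ)
    simp only [ne_eq, OfNat.ofNat_ne_zero, not_false_eq_true, zero_pow] at h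
    exact h.mono_left nhdsWithin_le_nhds
  have T : Tendsto (fun t => 8/45 * (t^2 * (Bk 0 t)^5) + 4/9 * ((t^2 * (Bk 0 t)^4) * (t * Bk 1 t))
      + 8/9 * ((t^2 * (Bk 0 t)^3) * (t * Bk 1 t)^2) - 52/45 * ((t^2 * (Bk 0 t)^5) * t^2)
      - 8/15 * (t * Bk 1 t)^5 + 4/3 * ((t^2 * (Bk 0 t)^2) * (t * Bk 1 t)^3)
      - (t^2 * (Bk 0 t)^4) * (t * Bk 1 t) * t^2) (𝓝[>] (0:ℝ))
      (𝓝 (8/45 * 0 + 4/9 * (0 * 1) + 8/9 * (0 * 1^2) - 52/45 * (0 * 0)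
        - 8/15 * 1^5 + 4/3 * (0 * 1^3) - 0 * 1 * 0)) := by
    have A1 := (tendsto_t2B0 5 (by norm_num)).const_mul (8/45 : ℝ)
    have A2 := ((tendsto_t2B0 4 (by norm_num)).mul hts).const_mul (4/9 : ℝ)
    have A3 := ((tendsto_t2B0 3 (by norm_num)).mul (hts.pow 2)).const_mul (8/9 : ℝ)
    have A4 := ((tendsto_t2B0 5 (by norm_num)).mul ht2).const_mul (52/45 : ℝ)
    have A5 := (hts.pow 5).const_mul (8/15 : ℝ)
    have A6 := ((tendsto_t2B0 2 (by norm_num)).mul (hts.pow 3)).const_mul (4/3 : ℝ)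
    have A7 := ((tendsto_t2B0 4 (by norm_num)).mul hts).mul ht2
    exact (((((A1.add A2).add A3).sub A4).sub A5).add A6).sub A7
  have hfun : ∀ t, 8/45 * (t^2 * (Bk 0 t)^5) + 4/9 * ((t^2 * (Bk 0 t)^4) * (t * Bk 1 t))
      + 8/9 * ((t^2 * (Bk 0 t)^3) * (t * Bk 1 t)^2) - 52/45 * ((t^2 * (Bk 0 t)^5) * t^2)
      - 8/15 * (t * Bk 1 t)^5 + 4/3 * ((t^2 * (Bk 0 t)^2) * (t * Bk 1 t)^3)
      - (t^2 * (Bk 0 t)^4) * (t * Bk 1 t) * t^2 = PP t := by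
    intro t
    simp only [PP]
    ring
  have T2 := T.congr hfun
  convert T2 using 2
  norm_num

lemma K0_eq_Bk0 (t : ℝ) : K0 t = Bk 0 t := by
  rw [K0, Bk_def]
  congr 1
  funext u
  rw [pow_zero, one_mul]

lemma IKM_eq (n : ℕ) : IKM 0 5 n = ∫ t in Set.Ioi (0:ℝ), (Bk 0 t)^5 * t^n := by
  unfold IKM
  congr 1
  funext t
  rw [pow_zero, one_mul, K0_eq_Bk0]

theorem IKM055_relation :
    IKM 0 5 5 = (76/15) * IKM 0 5 3 - (16/45) * IKM 0 5 1 + 8/15 := by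
  have i5 := moment_integrable 5 (by norm_num) (by norm_num)
  have i3 := moment_integrable 3 (by norm_num) (by norm_num)
  have i1 := moment_integrable 1 (by norm_num) (by norm_num)
  have i3' : IntegrableOn (fun t => 76/15 * ((Bk 0 t)^5 * t^3)) (Set.Ioi 0) := i3.const_mul _
  have i1' : IntegrableOn (fun t => 16/45 * ((Bk 0 t)^5 * t^1)) (Set.Ioi 0) := i1.const_mul _
  have i53 : IntegrableOn (fun t => (Bk 0 t)^5 * t^5 - 76/15 * ((Bk 0 t)^5 * t^3)) (Set.Ioi 0) :=
    i5.sub i3'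
  have ih : IntegrableOn (fun t => (Bk 0 t)^5 * t^5 - 76/15 * ((Bk 0 t)^5 * t^3)
      + 16/45 * ((Bk 0 t)^5 * t^1)) (Set.Ioi 0) := i53.add i1'
  have heqg : Set.EqOn (fun t => (Bk 0 t)^5 * t^5 - 76/15 * ((Bk 0 t)^5 * t^3)
      + 16/45 * ((Bk 0 t)^5 * t^1)) (fun t => (t^5 - 76/15*t^3 + 16/45*t) * (Bk 0 t)^5)
      (Set.Ioi 0) := by
    intro t _
    simp only
    ring
  have hgint : IntegrableOn (fun t => (t^5 - 76/15*t^3 + 16/45*t) * (Bk 0 t)^5) (Set.Ioi 0) :=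
    ih.congr_fun heqg measurableSet_Ioi
  -- FTC on (a, ∞)
  have key : ∀ a : ℝ, 0 < a →
      (∫ t in Set.Ioi a, (t^5 - 76/15*t^3 + 16/45*t) * (Bk 0 t)^5) = 0 - PP a := by
    intro a ha
    exact integral_Ioi_of_hasDerivAt_of_tendsto
      ((hasDerivAt_PP ha).continuousAt.continuousWithinAt)
      (fun x hx => hasDerivAt_PP (lt_trans ha hx))
      (hgint.mono_set (Set.Ioi_subset_Ioi (le_of_lt ha)))
      tendsto_PP_atTop
  have hseq : Tendsto (fun n : ℕ => (1:ℝ)/(n+1)) atTop (𝓝[>] (0:ℝ)) := by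
    apply tendsto_nhdsWithin_of_tendsto_nhds_of_eventually_within
    · exact tendsto_one_div_add_atTop_nhds_zero_nat
    · exact Eventually.of_forall fun n => by simp only [Set.mem_Ioi]; positivity
  have hmono : Monotone (fun n : ℕ => Set.Ioi ((1:ℝ)/(n+1))) := by
    intro a b hab
    apply Set.Ioi_subset_Ioi
    have h1 : ((a:ℝ)+1) ≤ ((b:ℝ)+1) := by
      have := Nat.cast_le (α := ℝ).2 hab
      linarith
    gcongr
  have hunion : (⋃ n : ℕ, Set.Ioi ((1:ℝ)/(n+1))) = Set.Ioi (0:ℝ) := by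
    ext x
    simp only [Set.mem_iUnion, Set.mem_Ioi]
    constructor
    · rintro ⟨n, hn⟩
      exact lt_trans (by positivity) hn
    · intro hx
      obtain ⟨n, hn⟩ := exists_nat_one_div_lt hx
      exact ⟨n, hn⟩
  have hsets : Tendsto (fun n : ℕ => ∫ t in Set.Ioi ((1:ℝ)/(n+1)),
      (t^5 - 76/15*t^3 + 16/45*t) * (Bk 0 t)^5) atTop
      (𝓝 (∫ t in Set.Ioi (0:ℝ), (t^5 - 76/15*t^3 + 16/45*t) * (Bk 0 t)^5)) := by
    have h := tendsto_setIntegral_of_monotone (fun n : ℕ => measurableSet_Ioi) hmono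
      (by rw [hunion]; exact hgint)
    rwa [hunion] at h
  have hPPs : Tendsto (fun n : ℕ => 0 - PP ((1:ℝ)/(n+1))) atTop (𝓝 (0 - (-8/15))) :=
    tendsto_const_nhds.sub (tendsto_PP_zero.comp hseq)
  have heq2 : (fun n : ℕ => ∫ t in Set.Ioi ((1:ℝ)/(n+1)),
      (t^5 - 76/15*t^3 + 16/45*t) * (Bk 0 t)^5) = fun n : ℕ => 0 - PP ((1:ℝ)/(n+1)) :=
    funext fun n => key ((1:ℝ)/((n:ℝ)+1)) (by positivity)
  rw [heq2] at hsets
  have hval : (∫ t in Set.Ioi (0:ℝ), (t^5 - 76/15*t^3 + 16/45*t) * (Bk 0 t)^5) = 8/15 := by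
    have := tendsto_nhds_unique hsets hPPs
    rw [this]
    norm_num
  -- expand the integral loinearly
  have hexpand : (∫ t in Set.Ioi (0:ℝ), (t^5 - 76/15*t^3 + 16/45*t) * (Bk 0 t)^5)
      = (∫ t in Set.Ioi (0:ℝ), (Bk 0 t)^5 * t^5)
        - 76/15 * (∫ t in Set.Ioi (0:ℝ), (Bk 0 t)^5 * t^3)
        + 16/45 * (∫ t in Set.Ioi (0:ℝ), (Bk 0 t)^5 * t^1) := by
    rw [← setIntegral_congr_fun measurableSet_Ioi heqg]
    rw [integral_add i53 i1', integral_sub i5 i3', integral_const_mul, integral_const_mul]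
  rw [hexpand] at hval
  have e5 := IKM_eq 5
  have e3 := IKM_eq 3
  have e1 := IKM_eq 1
  rw [e5, e3, e1]
  linarith
end
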